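/- arXiv:2304.08819 — 4 statements merged into one kernel-verified Lean document; each statement's English description precedes it below -/
import Mathlib

section
/- Under the standing assumption, a function H* ∈ 𝒜 satisfies J_{a*}(H*) = v(a*) (i.e., H* is an optimal retention) if and only if for every H ∈ 𝒜 one has ∫_{(0,∞)} H(z)·(a*·H*(z) + 1) dμ_F(z) − (1+θ)·∫_{(0,∞)} H(z) dμ_F̂(z) ≥ ∫_{(0,∞)} H*(z)·(a*·H*(z) + 1) dμ_F(z) − (1+θ)·∫_{(0,∞)} H*(z) dμ_F̂(z), where the integrals of nonnegative functions are taken in [0,+∞] and the right-hand side is finite. -/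
open MeasureTheory Set Filter Topology
open scoped ENNReal

noncomputable section

/-- The admissible set 𝒜: functions `H : [0,∞) → [0,∞)` with `H 0 = 0` that are
nondecreasing and 1-Lipschitz (extended to `ℝ`, with the conditions imposed on `[0,∞)`). -/
def Adm : Set (ℝ → ℝ) :=
  {H | H 0 = 0 ∧ (∀ z, 0 ≤ z → 0 ≤ H z) ∧ MonotoneOn H (Set.Ici 0) ∧
    LipschitzOnWith 1 H (Set.Ici 0)}

/-- The objective functional
`J_a(H) = ∫_{(0,∞)} ((a/2)·H² + H) dμ_F − (1+θ)·∫_{(0,∞)} H dμ_F̂`, valued in `EReal`. -/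
def Jfun (μF μFhat : Measure ℝ) (θ a : ℝ) (H : ℝ → ℝ) : EReal :=
  ((∫⁻ z in Set.Ioi (0:ℝ), ENNReal.ofReal (a / 2 * H z ^ 2 + H z) ∂μF : ℝ≥0∞) : EReal)
    - ((ENNReal.ofReal (1 + θ) * ∫⁻ z in Set.Ioi (0:ℝ), ENNReal.ofReal (H z) ∂μFhat : ℝ≥0∞) : EReal)

/-- `v(a) = inf_{H ∈ 𝒜} J_a(H)`. -/
def vfun (μF μFhat : Measure ℝ) (θ : ℝ) (a : ℝ) : EReal :=
  ⨅ H ∈ Adm, Jfun μF μFhat θ a H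

namespace Stmt9


lemma adm_zero : (fun _ : ℝ => (0:ℝ)) ∈ Adm := by
  refine ⟨rfl, fun z _ => le_refl 0, fun x _ y _ _ => le_rfl, ?_⟩
  intro x _ y _; simp

lemma adm_nonneg {H} (hH : H ∈ Adm) {z : ℝ} (hz : 0 ≤ z) : 0 ≤ H z := hH.2.1 z hz

lemma adm_le {H} (hH : H ∈ Adm) {z : ℝ} (hz : 0 ≤ z) : H z ≤ z := by
  have h := hH.2.2.2.dist_le_mul z (mem_Ici.2 hz) 0 (mem_Ici.2 le_rfl)
  rw [hH.1, Real.dist_eq, Real.dist_eq, sub_zero, sub_zero] at h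
  have : |H z| ≤ |z| := by simpa using h
  calc H z ≤ |H z| := le_abs_self _
    _ ≤ |z| := this
    _ = z := abs_of_nonneg hz

lemma adm_min_const {H} (hH : H ∈ Adm) {n : ℝ} (hn : 0 ≤ n) :
    (fun z => min (H z) n) ∈ Adm := by
  refine ⟨by simp [hH.1, hn], fun z hz => le_min (adm_nonneg hH hz) hn, ?_, ?_⟩
  · intro x hx y hy hxy
    exact min_le_min (hH.2.2.1 hx hy hxy) le_rfl
  · apply LipschitzOnWith.of_dist_le_mul
    intro x hx y hy
    have h := hH.2.2.2.dist_le_mul x hx y hy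
    rw [Real.dist_eq] at *
    rw [NNReal.coe_one, one_mul] at h ⊢
    have h1 := abs_le.1 h
    rw [abs_le]
    constructor
    · rcases le_total (H x) n with h2 | h2 <;> rcases le_total (H y) n with h3 | h3 <;>
        simp [min_eq_left, min_eq_right, h2, h3] <;> linarith [abs_nonneg (x - y), le_abs_self (x-y), neg_abs_le (x-y)]
    · rcases le_total (H x) n with h2 | h2 <;> rcases le_total (H y) n with h3 | h3 <;>
        simp [min_eq_left, min_eq_right, h2, h3] <;> linarith [abs_nonneg (x - y), le_abs_self (x-y), neg_abs_le (x-y)]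

lemma adm_combo {H1 H2} (h1 : H1 ∈ Adm) (h2 : H2 ∈ Adm) {t : ℝ} (ht0 : 0 ≤ t) (ht1 : t ≤ 1) :
    (fun z => H1 z + t * (H2 z - H1 z)) ∈ Adm := by
  refine ⟨by simp [h1.1, h2.1], ?_, ?_, ?_⟩
  · intro z hz
    show 0 ≤ H1 z + t * (H2 z - H1 z)
    nlinarith [adm_nonneg h1 hz, adm_nonneg h2 hz]
  · intro x hx y hy hxy
    have a1 := h1.2.2.1 hx hy hxy
    have a2 := h2.2.2.1 hx hy hxy
    show H1 x + t * (H2 x - H1 x) ≤ H1 y + t * (H2 y - H1 y)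
    nlinarith
  · apply LipschitzOnWith.of_dist_le_mul
    intro x hx y hy
    have d1 := h1.2.2.2.dist_le_mul x hx y hy
    have d2 := h2.2.2.2.dist_le_mul x hx y hy
    rw [Real.dist_eq] at *
    rw [NNReal.coe_one, one_mul] at d1 d2 ⊢
    have e1 := abs_le.1 d1
    have e2 := abs_le.1 d2
    rw [abs_le]
    constructor <;> nlinarith [e1.1, e1.2, e2.1, e2.2]

/-- monotone extension -/
def extA (H : ℝ → ℝ) : ℝ → ℝ := fun z => if 0 ≤ z then H z else 0

lemma extA_mono {H} (hH : H ∈ Adm) : Monotone (extA H) := by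
  intro x y hxy
  unfold extA
  by_cases hx : 0 ≤ x
  · rw [if_pos hx, if_pos (hx.trans hxy)]
    exact hH.2.2.1 hx (hx.trans hxy) hxy
  · rw [if_neg hx]
    by_cases hy : 0 ≤ y
    · rw [if_pos hy]; exact adm_nonneg hH hy
    · rw [if_neg hy]

lemma adm_aemeas {H} (hH : H ∈ Adm) (μ : Measure ℝ) :
    AEMeasurable H (μ.restrict (Set.Ioi 0)) := by
  refine ((extA_mono hH).measurable.aemeasurable).congr ?_
  filter_upwards [ae_restrict_mem measurableSet_Ioi] with z hz
  exact if_pos (le_of_lt hz)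

lemma ae_nonneg_Ioi {μ : Measure ℝ} {f : ℝ → ℝ} (h : ∀ z ∈ Set.Ioi (0:ℝ), 0 ≤ f z) :
    0 ≤ᵐ[μ.restrict (Set.Ioi 0)] f := by
  filter_upwards [ae_restrict_mem measurableSet_Ioi] with z hz using h z hz

lemma integrable_of_lint {μ : Measure ℝ} {f : ℝ → ℝ} (hm : AEMeasurable f μ)
    (h0 : 0 ≤ᵐ[μ] f) (hfin : ∫⁻ z, ENNReal.ofReal (f z) ∂μ < ⊤) : Integrable f μ := by
  refine ⟨hm.aestronglyMeasurable, ?_⟩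
  rwa [hasFiniteIntegral_iff_ofReal h0]

lemma lint_eq_ofReal {μ : Measure ℝ} {f : ℝ → ℝ} (hi : Integrable f μ) (h0 : 0 ≤ᵐ[μ] f) :
    ∫⁻ z, ENNReal.ofReal (f z) ∂μ = ENNReal.ofReal (∫ z, f z ∂μ) :=
  (ofReal_integral_eq_lintegral_ofReal hi h0).symm

lemma ereal_coe_ofReal {x : ℝ} (hx : 0 ≤ x) :
    ((ENNReal.ofReal x : ℝ≥0∞) : EReal) = (x : EReal) := by
  rw [EReal.coe_ennreal_ofReal, max_eq_left hx]

lemma Jtop {B : ℝ≥0∞} (hB : B ≠ ⊤) :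
    ((⊤ : ℝ≥0∞) : EReal) - (B : EReal) = ⊤ := by
  rw [← ENNReal.ofReal_toReal hB, ereal_coe_ofReal ENNReal.toReal_nonneg,
    EReal.coe_ennreal_top, EReal.top_sub_coe]

lemma Jreal {μ ν : Measure ℝ} {c : ℝ} (hc : 0 ≤ c) {f g : ℝ → ℝ}
    (hf : Integrable f μ) (hf0 : 0 ≤ᵐ[μ] f) (hg : Integrable g ν) (hg0 : 0 ≤ᵐ[ν] g) :
    ((∫⁻ z, ENNReal.ofReal (f z) ∂μ : ℝ≥0∞) : EReal)
      - ((ENNReal.ofReal c * ∫⁻ z, ENNReal.ofReal (g z) ∂ν : ℝ≥0∞) : EReal)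
    = ((∫ z, f z ∂μ - c * ∫ z, g z ∂ν : ℝ) : EReal) := by
  rw [lint_eq_ofReal hf hf0, lint_eq_ofReal hg hg0, ← ENNReal.ofReal_mul hc,
    ereal_coe_ofReal (integral_nonneg_of_ae hf0),
    ereal_coe_ofReal (mul_nonneg hc (integral_nonneg_of_ae hg0))]
  exact (EReal.coe_sub _ _).symm



lemma core {μ ν : Measure ℝ} {a c : ℝ} (ha : 0 < a) (hc : 0 ≤ c) {u w : ℝ → ℝ}
    (iu1 : Integrable u μ) (iu2 : Integrable (fun z => u z ^ 2) μ)
    (iw1 : Integrable w μ) (iw2 : Integrable (fun z => w z ^ 2) μ)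
    (iuw : Integrable (fun z => u z * w z) μ)
    (inu : Integrable u ν) (inw : Integrable w ν)
    (hopt : ∀ t : ℝ, t ∈ Set.Ioc (0:ℝ) 1 →
      ∫ z, (a / 2 * u z ^ 2 + u z) ∂μ - c * ∫ z, u z ∂ν ≤
      ∫ z, (a / 2 * (u z + t * (w z - u z)) ^ 2 + (u z + t * (w z - u z))) ∂μ
        - c * ∫ z, (u z + t * (w z - u z)) ∂ν) :
    ∫ z, u z * (a * u z + 1) ∂μ - c * ∫ z, u z ∂ν ≤
      ∫ z, w z * (a * u z + 1) ∂μ - c * ∫ z, w z ∂ν := by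
  have iP : Integrable (fun z => a / 2 * u z ^ 2 + u z) μ := (iu2.const_mul _).add iu1
  have iwau : Integrable (fun z => w z * (a * u z + 1)) μ := by
    have h : (fun z => w z * (a * u z + 1)) = fun z => a * (u z * w z) + w z :=
      funext fun z => by ring
    rw [h]; exact (iuw.const_mul a).add iw1
  have iuau : Integrable (fun z => u z * (a * u z + 1)) μ := by
    have h : (fun z => u z * (a * u z + 1)) = fun z => a * u z ^ 2 + u z :=
      funext fun z => by ring
    rw [h]; exact (iu2.const_mul a).add iu1
  have iQ : Integrable (fun z => (w z - u z) ^ 2) μ := by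
    have h : (fun z => (w z - u z) ^ 2) = fun z => (w z ^ 2 - 2 * (u z * w z)) + u z ^ 2 :=
      funext fun z => by ring
    rw [h]; exact (iw2.sub (iuw.const_mul 2)).add iu2
  set Tu := ∫ z, u z * (a * u z + 1) ∂μ with hTu
  set Tw := ∫ z, w z * (a * u z + 1) ∂μ with hTw
  set Nu := ∫ z, u z ∂ν with hNu
  set Nw := ∫ z, w z ∂ν with hNw
  set Q := ∫ z, (w z - u z) ^ 2 ∂μ with hQdef
  have hQ : 0 ≤ Q := integral_nonneg fun z => sq_nonneg _
  set D : ℝ := (Tw - Tu) - c * (Nw - Nu) with hD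
  suffices hDpos : 0 ≤ D by
    have : Tu - c * Nu ≤ Tw - c * Nw := by
      simp only [hD] at hDpos; linarith
    exact this
  have key : ∀ t : ℝ, t ∈ Set.Ioc (0:ℝ) 1 → 0 ≤ t * D + a * t ^ 2 / 2 * Q := by
    intro t ht
    have exp1 : (fun z => a / 2 * (u z + t * (w z - u z)) ^ 2 + (u z + t * (w z - u z)))
        = fun z => (a / 2 * u z ^ 2 + u z)
            + t * (w z * (a * u z + 1) - u z * (a * u z + 1))
            + a * t ^ 2 / 2 * (w z - u z) ^ 2 :=
      funext fun z => by ring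
    have iB : Integrable (fun z => t * (w z * (a * u z + 1) - u z * (a * u z + 1))) μ := by
      have h : (fun z => t * (w z * (a * u z + 1) - u z * (a * u z + 1)))
          = fun z => t * ((fun z => w z * (a * u z + 1)) z - (fun z => u z * (a * u z + 1)) z) := rfl
      rw [h]; exact (iwau.sub iuau).const_mul t
    have iC : Integrable (fun z => a * t ^ 2 / 2 * (w z - u z) ^ 2) μ := iQ.const_mul _
    have iwu : Integrable (fun z => t * (w z - u z)) ν := by
      have h : (fun z => t * (w z - u z)) = fun z => t * ((fun z => w z) z - (fun z => u z) z) := rfl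
      rw [h]; exact (inw.sub inu).const_mul t
    have iA : Integrable (fun z => (a / 2 * u z ^ 2 + u z)
        + t * (w z * (a * u z + 1) - u z * (a * u z + 1))) μ := iP.add iB
    have e1 : ∫ z, (a / 2 * (u z + t * (w z - u z)) ^ 2 + (u z + t * (w z - u z))) ∂μ
        = (∫ z, (a / 2 * u z ^ 2 + u z) ∂μ) + t * (Tw - Tu) + a * t ^ 2 / 2 * Q := by
      rw [exp1, integral_add iA iC, integral_add iP iB,
        integral_const_mul, integral_const_mul, integral_sub iwau iuau]
    have e2 : ∫ z, (u z + t * (w z - u z)) ∂ν = Nu + t * (Nw - Nu) := by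
      rw [integral_add inu iwu, integral_const_mul, integral_sub inw inu]
    have h := hopt t ht
    rw [e1, e2] at h
    have : t * D + a * t ^ 2 / 2 * Q
        = (t * (Tw - Tu) + a * t ^ 2 / 2 * Q) - c * (t * (Nw - Nu)) := by
      simp only [hD]; ring
    rw [this]; linarith
  by_contra hneg
  push_neg at hneg
  rcases eq_or_lt_of_le hQ with hQ0 | hQpos
  · have h1 := key 1 ⟨one_pos, le_rfl⟩
    rw [← hQ0] at h1; nlinarith
  · set t0 := min 1 (-D / (a * Q)) with ht0def
    have haQ : 0 < a * Q := mul_pos ha hQpos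
    have ht0pos : 0 < t0 := lt_min one_pos (div_pos (neg_pos.2 hneg) haQ)
    have ht0le : t0 ≤ 1 := min_le_left _ _
    have h2 : t0 * (a * Q) ≤ -D := (le_div_iff₀ haQ).1 (min_le_right _ _)
    have h3 := key t0 ⟨ht0pos, ht0le⟩
    nlinarith [mul_pos ht0pos (neg_pos.2 hneg),
      mul_le_mul_of_nonneg_left h2 (by positivity : (0:ℝ) ≤ t0 / 2)]


end Stmt9

open Stmt9 in
set_option maxHeartbeats 1000000 in
/-- Optimality condition I: H* ∈ 𝒜 is optimal iff the variational
inequality holds for all H ∈ 𝒜, the right-hand side being finite. -/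
theorem stmt_9
    (F Fhat : StieltjesFunction ℝ) (g : ℝ → ℝ) (θ0 θ : ℝ)
    (hF_neg : ∀ z : ℝ, z < 0 → F z = 0)
    (hF_top : Tendsto (fun z => F z) atTop (nhds 1))
    (hg_mono : MonotoneOn g (Set.Icc 0 1))
    (hg_left : ∀ p ∈ Set.Ioc (0:ℝ) 1, Tendsto g (nhdsWithin p (Set.Iio p)) (nhds (g p)))
    (hg_zero : g 0 = 0)
    (hg_zero' : Tendsto g (nhdsWithin 0 (Set.Ioi 0)) (nhds 0))
    (hg_one : g 1 = 1)
    (hg_pos : 0 < g (1 - F 0))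
    (hθ0 : -1 < θ0)
    (hθ : θ = (1 + θ0) * g (1 - F 0) - 1)
    (hFhat : ∀ z : ℝ, Fhat z = if z < 0 then 0 else 1 - g (1 - F z) / g (1 - F 0))
    (hFhat_top : Tendsto (fun z => Fhat z) atTop (nhds 1))
    (prem : ℝ) (hprem_pos : 0 < prem)
    (hEZ_pos : 0 < ∫⁻ z in Set.Ioi (0:ℝ), ENNReal.ofReal z ∂F.measure)
    (hEZ_lt : (∫⁻ z in Set.Ioi (0:ℝ), ENNReal.ofReal z ∂F.measure) < ENNReal.ofReal prem)
    (hprem_lt : ENNReal.ofReal prem <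
        ENNReal.ofReal (1 + θ) * ∫⁻ z in Set.Ioi (0:ℝ), ENNReal.ofReal z ∂Fhat.measure)
    (hfin : ENNReal.ofReal (1 + θ) *
        (∫⁻ z in Set.Ioi (0:ℝ), ENNReal.ofReal z ∂Fhat.measure) < ⊤)
    (astar : ℝ) (hastar_pos : 0 < astar)
    (hastar : vfun F.measure Fhat.measure θ astar =
        ((prem - (ENNReal.ofReal (1 + θ) *
          (∫⁻ z in Set.Ioi (0:ℝ), ENNReal.ofReal z ∂Fhat.measure)).toReal : ℝ) : EReal))
    (Hstar : ℝ → ℝ) (hHstar : Hstar ∈ Adm) :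
    Jfun F.measure Fhat.measure θ astar Hstar = vfun F.measure Fhat.measure θ astar ↔
      ((∫⁻ z in Set.Ioi (0:ℝ),
          ENNReal.ofReal (Hstar z * (astar * Hstar z + 1)) ∂F.measure) < ⊤ ∧
       ∀ H ∈ Adm,
        ((∫⁻ z in Set.Ioi (0:ℝ),
            ENNReal.ofReal (Hstar z * (astar * Hstar z + 1)) ∂F.measure : ℝ≥0∞) : EReal)
          - ((ENNReal.ofReal (1 + θ) *
              ∫⁻ z in Set.Ioi (0:ℝ), ENNReal.ofReal (Hstar z) ∂Fhat.measure : ℝ≥0∞) : EReal)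
        ≤ ((∫⁻ z in Set.Ioi (0:ℝ),
            ENNReal.ofReal (H z * (astar * Hstar z + 1)) ∂F.measure : ℝ≥0∞) : EReal)
          - ((ENNReal.ofReal (1 + θ) *
              ∫⁻ z in Set.Ioi (0:ℝ), ENNReal.ofReal (H z) ∂Fhat.measure : ℝ≥0∞) : EReal)) := by
  classical
  have hc : (0:ℝ) < 1 + θ := by
    have h1 : (0:ℝ) < 1 + θ0 := by linarith
    have h2 := mul_pos h1 hg_pos
    rw [hθ]; linarith
  have hc0 : (0:ℝ) ≤ 1 + θ := hc.le
  have hzF : (∫⁻ z in Set.Ioi (0:ℝ), ENNReal.ofReal z ∂F.measure) ≠ ⊤ :=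
    (hEZ_lt.trans ENNReal.ofReal_lt_top).ne
  have hzN : (∫⁻ z in Set.Ioi (0:ℝ), ENNReal.ofReal z ∂Fhat.measure) ≠ ⊤ := by
    intro h
    rw [h, ENNReal.mul_top (fun h0 => (ENNReal.ofReal_eq_zero.1 h0).not_gt hc)] at hfin
    exact lt_irrefl _ hfin
  -- integrability of admissible functions
  have hlintF : ∀ H, H ∈ Adm →
      (∫⁻ z in Set.Ioi (0:ℝ), ENNReal.ofReal (H z) ∂F.measure) ≠ ⊤ := by
    intro H hH
    refine ne_top_of_le_ne_top hzF (lintegral_mono_ae ?_)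
    filter_upwards [ae_restrict_mem measurableSet_Ioi] with z hz
    exact ENNReal.ofReal_le_ofReal (adm_le hH (le_of_lt hz))
  have hlintN : ∀ H, H ∈ Adm →
      (∫⁻ z in Set.Ioi (0:ℝ), ENNReal.ofReal (H z) ∂Fhat.measure) ≠ ⊤ := by
    intro H hH
    refine ne_top_of_le_ne_top hzN (lintegral_mono_ae ?_)
    filter_upwards [ae_restrict_mem measurableSet_Ioi] with z hz
    exact ENNReal.ofReal_le_ofReal (adm_le hH (le_of_lt hz))
  have hBfin : ∀ H, H ∈ Adm →
      (ENNReal.ofReal (1 + θ) * ∫⁻ z in Set.Ioi (0:ℝ), ENNReal.ofReal (H z) ∂Fhat.measure) ≠ ⊤ :=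
    fun H hH => ENNReal.mul_ne_top ENNReal.ofReal_ne_top (hlintN H hH)
  have hintμ : ∀ H, H ∈ Adm → Integrable H (F.measure.restrict (Set.Ioi 0)) := by
    intro H hH
    exact integrable_of_lint (adm_aemeas hH _)
      (ae_nonneg_Ioi fun z hz => adm_nonneg hH (le_of_lt hz))
      (lt_top_iff_ne_top.2 (hlintF H hH))
  have hintν : ∀ H, H ∈ Adm → Integrable H (Fhat.measure.restrict (Set.Ioi 0)) := by
    intro H hH
    exact integrable_of_lint (adm_aemeas hH _)
      (ae_nonneg_Ioi fun z hz => adm_nonneg hH (le_of_lt hz))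
      (lt_top_iff_ne_top.2 (hlintN H hH))
  -- ae nonnegativity helpers
  have aeνstar : (0:ℝ → ℝ) ≤ᵐ[Fhat.measure.restrict (Set.Ioi 0)] Hstar :=
    ae_nonneg_Ioi fun z hz => adm_nonneg hHstar (le_of_lt hz)
  have aeμTst : 0 ≤ᵐ[F.measure.restrict (Set.Ioi 0)]
      (fun z => Hstar z * (astar * Hstar z + 1)) := by
    refine ae_nonneg_Ioi fun z hz => ?_
    have h0 := adm_nonneg hHstar (le_of_lt hz)
    have h2 : (0:ℝ) ≤ astar * Hstar z + 1 := by nlinarith [mul_nonneg hastar_pos.le h0]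
    exact mul_nonneg h0 h2
  have aeμSst : 0 ≤ᵐ[F.measure.restrict (Set.Ioi 0)]
      (fun z => astar / 2 * Hstar z ^ 2 + Hstar z) := by
    refine ae_nonneg_Ioi fun z hz => ?_
    have h0 := adm_nonneg hHstar (le_of_lt hz)
    nlinarith [sq_nonneg (Hstar z)]
  have aemStar : AEMeasurable Hstar (F.measure.restrict (Set.Ioi 0)) := adm_aemeas hHstar _
  have aemSst : AEMeasurable (fun z => astar / 2 * Hstar z ^ 2 + Hstar z)
      (F.measure.restrict (Set.Ioi 0)) := by
    refine (((aemStar.mul aemStar).const_mul (astar / 2)).add aemStar).congr ?_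
    exact ae_of_all _ fun z => by simp only [Pi.add_apply, Pi.mul_apply]; ring
  have aemTst : AEMeasurable (fun z => Hstar z * (astar * Hstar z + 1))
      (F.measure.restrict (Set.Ioi 0)) :=
    aemStar.mul ((aemStar.const_mul astar).add aemeasurable_const)
  constructor
  · -- forward direction
    intro hopt
    have hle : ∀ H ∈ Adm, Jfun F.measure Fhat.measure θ astar Hstar ≤
        Jfun F.measure Fhat.measure θ astar H := by
      intro H hH
      rw [hopt]
      simp only [vfun]
      exact iInf₂_le H hH
    have hJ0 : Jfun F.measure Fhat.measure θ astar (fun _ => (0:ℝ)) = (0:EReal) := by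
      simp [Jfun]
    have hS : (∫⁻ z in Set.Ioi (0:ℝ),
        ENNReal.ofReal (astar / 2 * Hstar z ^ 2 + Hstar z) ∂F.measure) ≠ ⊤ := by
      intro htop
      have h := hle _ adm_zero
      rw [hJ0] at h
      have htopJ : Jfun F.measure Fhat.measure θ astar Hstar = ⊤ := by
        simp only [Jfun]
        rw [htop]
        exact Jtop (hBfin Hstar hHstar)
      rw [htopJ] at h
      simp at h
    have iSst : Integrable (fun z => astar / 2 * Hstar z ^ 2 + Hstar z)
        (F.measure.restrict (Set.Ioi 0)) :=
      integrable_of_lint aemSst aeμSst (lt_top_iff_ne_top.2 hS)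
    have hT : (∫⁻ z in Set.Ioi (0:ℝ),
        ENNReal.ofReal (Hstar z * (astar * Hstar z + 1)) ∂F.measure) < ⊤ := by
      have hb : (∫⁻ z in Set.Ioi (0:ℝ),
          ENNReal.ofReal (Hstar z * (astar * Hstar z + 1)) ∂F.measure)
          ≤ 2 * ∫⁻ z in Set.Ioi (0:ℝ),
            ENNReal.ofReal (astar / 2 * Hstar z ^ 2 + Hstar z) ∂F.measure := by
        rw [← lintegral_const_mul' 2 _ (by norm_num : (2:ℝ≥0∞) ≠ ⊤)]
        refine lintegral_mono_ae ?_
        filter_upwards [ae_restrict_mem measurableSet_Ioi] with z hz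
        have h0 := adm_nonneg hHstar (le_of_lt hz)
        have key : Hstar z * (astar * Hstar z + 1)
            ≤ 2 * (astar / 2 * Hstar z ^ 2 + Hstar z) := by nlinarith
        calc ENNReal.ofReal (Hstar z * (astar * Hstar z + 1))
            ≤ ENNReal.ofReal (2 * (astar / 2 * Hstar z ^ 2 + Hstar z)) :=
              ENNReal.ofReal_le_ofReal key
          _ = 2 * ENNReal.ofReal (astar / 2 * Hstar z ^ 2 + Hstar z) := by
              rw [ENNReal.ofReal_mul (by norm_num : (0:ℝ) ≤ 2)]
              norm_num
      exact lt_of_le_of_lt hb (ENNReal.mul_lt_top (by norm_num) (lt_top_iff_ne_top.2 hS))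
    refine ⟨hT, ?_⟩
    intro H hH
    have iTst : Integrable (fun z => Hstar z * (astar * Hstar z + 1))
        (F.measure.restrict (Set.Ioi 0)) := integrable_of_lint aemTst aeμTst hT
    have iνstar : Integrable Hstar (Fhat.measure.restrict (Set.Ioi 0)) := hintν _ hHstar
    by_cases hTH : (∫⁻ z in Set.Ioi (0:ℝ),
        ENNReal.ofReal (H z * (astar * Hstar z + 1)) ∂F.measure) = ⊤
    · rw [hTH, Jtop (hBfin H hH)]
      exact le_top
    · have aemH : AEMeasurable H (F.measure.restrict (Set.Ioi 0)) := adm_aemeas hH _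
      have aeμTH : 0 ≤ᵐ[F.measure.restrict (Set.Ioi 0)]
          (fun z => H z * (astar * Hstar z + 1)) := by
        refine ae_nonneg_Ioi fun z hz => ?_
        have h0 := adm_nonneg hH (le_of_lt hz)
        have h1 := adm_nonneg hHstar (le_of_lt hz)
        have h2 : (0:ℝ) ≤ astar * Hstar z + 1 := by nlinarith [mul_nonneg hastar_pos.le h1]
        exact mul_nonneg h0 h2
      have aeνH : (0:ℝ → ℝ) ≤ᵐ[Fhat.measure.restrict (Set.Ioi 0)] H :=
        ae_nonneg_Ioi fun z hz => adm_nonneg hH (le_of_lt hz)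
      have iTH : Integrable (fun z => H z * (astar * Hstar z + 1))
          (F.measure.restrict (Set.Ioi 0)) :=
        integrable_of_lint (aemH.mul ((aemStar.const_mul astar).add aemeasurable_const))
          aeμTH (lt_top_iff_ne_top.2 hTH)
      have iνH : Integrable H (Fhat.measure.restrict (Set.Ioi 0)) := hintν _ hH
      have iu1 : Integrable Hstar (F.measure.restrict (Set.Ioi 0)) := hintμ _ hHstar
      have iu2 : Integrable (fun z => Hstar z ^ 2) (F.measure.restrict (Set.Ioi 0)) := by
        refine Integrable.mono' (iSst.const_mul (2 / astar))
          ((aemStar.mul aemStar).congr (ae_of_all _ fun z => by simp only [Pi.add_apply, Pi.mul_apply]; ring)).aestronglyMeasurable ?_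
        filter_upwards [ae_restrict_mem measurableSet_Ioi] with z hz
        have h0 := adm_nonneg hHstar (le_of_lt hz)
        rw [Real.norm_eq_abs, abs_of_nonneg (sq_nonneg _)]
        have hexp : 2 / astar * (astar / 2 * Hstar z ^ 2 + Hstar z)
            = Hstar z ^ 2 + 2 / astar * Hstar z := by
          field_simp
        rw [hexp]
        have : 0 ≤ 2 / astar * Hstar z := by positivity
        linarith
      -- per-n inequality via core
      have main : ∀ n : ℕ,
          (∫ z, Hstar z * (astar * Hstar z + 1) ∂(F.measure.restrict (Set.Ioi 0)))
            - (1 + θ) * ∫ z, Hstar z ∂(Fhat.measure.restrict (Set.Ioi 0))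
          ≤ (∫ z, min (H z) (n:ℝ) * (astar * Hstar z + 1) ∂(F.measure.restrict (Set.Ioi 0)))
            - (1 + θ) * ∫ z, min (H z) (n:ℝ) ∂(Fhat.measure.restrict (Set.Ioi 0)) := by
        intro n
        have hwAdm : (fun z => min (H z) (n:ℝ)) ∈ Adm := adm_min_const hH (Nat.cast_nonneg n)
        have aew : AEMeasurable (fun z => min (H z) (n:ℝ)) (F.measure.restrict (Set.Ioi 0)) :=
          adm_aemeas hwAdm _
        have iw1 : Integrable (fun z => min (H z) (n:ℝ)) (F.measure.restrict (Set.Ioi 0)) :=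
          hintμ _ hwAdm
        have iw2 : Integrable (fun z => (min (H z) (n:ℝ)) ^ 2)
            (F.measure.restrict (Set.Ioi 0)) := by
          refine Integrable.mono' (iw1.const_mul (n:ℝ))
            ((aew.mul aew).congr (ae_of_all _ fun z => by simp only [Pi.add_apply, Pi.mul_apply]; ring)).aestronglyMeasurable ?_
          filter_upwards [ae_restrict_mem measurableSet_Ioi] with z hz
          have h0 : 0 ≤ min (H z) (n:ℝ) := le_min (adm_nonneg hH (le_of_lt hz)) (Nat.cast_nonneg n)
          rw [Real.norm_eq_abs, abs_of_nonneg (sq_nonneg _)]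
          nlinarith [min_le_right (H z) (n:ℝ)]
        have iuw : Integrable (fun z => Hstar z * min (H z) (n:ℝ))
            (F.measure.restrict (Set.Ioi 0)) := by
          refine Integrable.mono' (iu1.const_mul (n:ℝ))
            (aemStar.mul aew).aestronglyMeasurable ?_
          filter_upwards [ae_restrict_mem measurableSet_Ioi] with z hz
          have h0 : 0 ≤ min (H z) (n:ℝ) := le_min (adm_nonneg hH (le_of_lt hz)) (Nat.cast_nonneg n)
          have h1 := adm_nonneg hHstar (le_of_lt hz)
          rw [Real.norm_eq_abs, abs_of_nonneg (mul_nonneg h1 h0)]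
          nlinarith [min_le_right (H z) (n:ℝ)]
        have iνw : Integrable (fun z => min (H z) (n:ℝ)) (Fhat.measure.restrict (Set.Ioi 0)) :=
          hintν _ hwAdm
        refine core hastar_pos hc0 iu1 iu2 iw1 iw2 iuw iνstar iνw ?_
        intro t ht
        set K : ℝ → ℝ := fun z => Hstar z + t * (min (H z) (n:ℝ) - Hstar z) with hKdef
        have hK : K ∈ Adm := adm_combo hHstar hwAdm ht.1.le ht.2
        have hJle := hle K hK
        have aeμK : 0 ≤ᵐ[F.measure.restrict (Set.Ioi 0)]
            (fun z => astar / 2 * K z ^ 2 + K z) := by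
          refine ae_nonneg_Ioi fun z hz => ?_
          have h0 := adm_nonneg hK (le_of_lt hz)
          show 0 ≤ astar / 2 * K z ^ 2 + K z
          exact add_nonneg (mul_nonneg (div_pos hastar_pos two_pos).le (sq_nonneg _)) h0
        have aeνK : (0:ℝ → ℝ) ≤ᵐ[Fhat.measure.restrict (Set.Ioi 0)] K :=
          ae_nonneg_Ioi fun z hz => adm_nonneg hK (le_of_lt hz)
        have iνK : Integrable K (Fhat.measure.restrict (Set.Ioi 0)) := hintν _ hK
        have iμK : Integrable (fun z => astar / 2 * K z ^ 2 + K z)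
            (F.measure.restrict (Set.Ioi 0)) := by
          have base : Integrable (fun z =>
              astar / 2 * ((1 - t) ^ 2 * Hstar z ^ 2
                + 2 * ((1 - t) * t) * (Hstar z * min (H z) (n:ℝ))
                + t ^ 2 * (min (H z) (n:ℝ)) ^ 2)
              + ((1 - t) * Hstar z + t * min (H z) (n:ℝ)))
              (F.measure.restrict (Set.Ioi 0)) := by
            refine Integrable.add (Integrable.const_mul ?_ _) ?_
            · exact ((iu2.const_mul _).add (iuw.const_mul _)).add (iw2.const_mul _)
            · exact (iu1.const_mul _).add (iw1.const_mul _)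
          refine base.congr (ae_of_all _ fun z => ?_)
          simp only [hKdef]
          ring
        have e1 : Jfun F.measure Fhat.measure θ astar Hstar
            = (((∫ z, (astar / 2 * Hstar z ^ 2 + Hstar z) ∂(F.measure.restrict (Set.Ioi 0)))
                - (1 + θ) * ∫ z, Hstar z ∂(Fhat.measure.restrict (Set.Ioi 0)) : ℝ) : EReal) := by
          simp only [Jfun]
          exact Jreal hc0 iSst aeμSst iνstar aeνstar
        have e2 : Jfun F.measure Fhat.measure θ astar K
            = (((∫ z, (astar / 2 * K z ^ 2 + K z) ∂(F.measure.restrict (Set.Ioi 0)))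
                - (1 + θ) * ∫ z, K z ∂(Fhat.measure.restrict (Set.Ioi 0)) : ℝ) : EReal) := by
          simp only [Jfun]
          exact Jreal hc0 iμK aeμK iνK aeνK
        rw [e1, e2] at hJle
        exact EReal.coe_le_coe_iff.1 hJle
      -- pass to the limit
      have tendμ : Tendsto
          (fun n : ℕ => ∫ z, min (H z) (n:ℝ) * (astar * Hstar z + 1)
            ∂(F.measure.restrict (Set.Ioi 0))) atTop
          (nhds (∫ z, H z * (astar * Hstar z + 1) ∂(F.measure.restrict (Set.Ioi 0)))) := by
        refine tendsto_integral_of_dominated_convergence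
          (fun z => H z * (astar * Hstar z + 1)) (fun n => ?_) iTH (fun n => ?_) ?_
        · exact ((adm_aemeas (adm_min_const hH (Nat.cast_nonneg n)) _).mul
            ((aemStar.const_mul astar).add aemeasurable_const)).aestronglyMeasurable
        · filter_upwards [ae_restrict_mem measurableSet_Ioi] with z hz
          have h0 : 0 ≤ min (H z) (n:ℝ) := le_min (adm_nonneg hH (le_of_lt hz)) (Nat.cast_nonneg n)
          have h1 := adm_nonneg hHstar (le_of_lt hz)
          have h2 : (0:ℝ) ≤ astar * Hstar z + 1 := by
            nlinarith [mul_nonneg hastar_pos.le h1]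
          rw [Real.norm_eq_abs, abs_of_nonneg (mul_nonneg h0 h2)]
          exact mul_le_mul_of_nonneg_right (min_le_left _ _) h2
        · refine ae_of_all _ fun z => ?_
          have hmin : Tendsto (fun n : ℕ => min (H z) (n:ℝ)) atTop (nhds (H z)) := by
            refine tendsto_atTop_of_eventually_const (i₀ := ⌈H z⌉₊) fun n hn => ?_
            exact min_eq_left ((Nat.le_ceil _).trans (Nat.cast_le.2 hn))
          exact hmin.mul_const _
      have tendν : Tendsto
          (fun n : ℕ => ∫ z, min (H z) (n:ℝ) ∂(Fhat.measure.restrict (Set.Ioi 0))) atTop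
          (nhds (∫ z, H z ∂(Fhat.measure.restrict (Set.Ioi 0)))) := by
        refine tendsto_integral_of_dominated_convergence H
          (fun n => (adm_aemeas (adm_min_const hH (Nat.cast_nonneg n)) _).aestronglyMeasurable)
          iνH (fun n => ?_) ?_
        · filter_upwards [ae_restrict_mem measurableSet_Ioi] with z hz
          have h0 : 0 ≤ min (H z) (n:ℝ) := le_min (adm_nonneg hH (le_of_lt hz)) (Nat.cast_nonneg n)
          rw [Real.norm_eq_abs, abs_of_nonneg h0]
          exact min_le_left _ _
        · refine ae_of_all _ fun z => ?_
          refine tendsto_atTop_of_eventually_const (i₀ := ⌈H z⌉₊) fun n hn => ?_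
          exact min_eq_left ((Nat.le_ceil _).trans (Nat.cast_le.2 hn))
      have tlim := tendμ.sub (tendν.const_mul (1 + θ))
      have hreal := ge_of_tendsto' tlim main
      have g1 : ((∫⁻ z in Set.Ioi (0:ℝ),
            ENNReal.ofReal (Hstar z * (astar * Hstar z + 1)) ∂F.measure : ℝ≥0∞) : EReal)
          - ((ENNReal.ofReal (1 + θ) *
              ∫⁻ z in Set.Ioi (0:ℝ), ENNReal.ofReal (Hstar z) ∂Fhat.measure : ℝ≥0∞) : EReal)
          = (((∫ z, Hstar z * (astar * Hstar z + 1) ∂(F.measure.restrict (Set.Ioi 0)))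
              - (1 + θ) * ∫ z, Hstar z ∂(Fhat.measure.restrict (Set.Ioi 0)) : ℝ) : EReal) :=
        Jreal hc0 iTst aeμTst iνstar aeνstar
      have g2 : ((∫⁻ z in Set.Ioi (0:ℝ),
            ENNReal.ofReal (H z * (astar * Hstar z + 1)) ∂F.measure : ℝ≥0∞) : EReal)
          - ((ENNReal.ofReal (1 + θ) *
              ∫⁻ z in Set.Ioi (0:ℝ), ENNReal.ofReal (H z) ∂Fhat.measure : ℝ≥0∞) : EReal)
          = (((∫ z, H z * (astar * Hstar z + 1) ∂(F.measure.restrict (Set.Ioi 0)))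
              - (1 + θ) * ∫ z, H z ∂(Fhat.measure.restrict (Set.Ioi 0)) : ℝ) : EReal) :=
        Jreal hc0 iTH aeμTH iνH aeνH
      rw [g1, g2]
      exact EReal.coe_le_coe_iff.2 hreal
  · -- backward direction
    rintro ⟨hTfin, hVI⟩
    have iTst : Integrable (fun z => Hstar z * (astar * Hstar z + 1))
        (F.measure.restrict (Set.Ioi 0)) := integrable_of_lint aemTst aeμTst hTfin
    have iu1 : Integrable Hstar (F.measure.restrict (Set.Ioi 0)) := hintμ _ hHstar
    have iνstar : Integrable Hstar (Fhat.measure.restrict (Set.Ioi 0)) := hintν _ hHstar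
    have iu2 : Integrable (fun z => Hstar z ^ 2) (F.measure.restrict (Set.Ioi 0)) := by
      refine Integrable.mono' (iTst.const_mul (1 / astar))
        ((aemStar.mul aemStar).congr (ae_of_all _ fun z => by simp only [Pi.add_apply, Pi.mul_apply]; ring)).aestronglyMeasurable ?_
      filter_upwards [ae_restrict_mem measurableSet_Ioi] with z hz
      have h0 := adm_nonneg hHstar (le_of_lt hz)
      rw [Real.norm_eq_abs, abs_of_nonneg (sq_nonneg _)]
      have hexp : 1 / astar * (Hstar z * (astar * Hstar z + 1))
          = Hstar z ^ 2 + 1 / astar * Hstar z := by field_simp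
      rw [hexp]
      have : 0 ≤ 1 / astar * Hstar z := by positivity
      linarith
    have iSst : Integrable (fun z => astar / 2 * Hstar z ^ 2 + Hstar z)
        (F.measure.restrict (Set.Ioi 0)) := (iu2.const_mul _).add iu1
    simp only [vfun]
    refine le_antisymm (le_iInf₂ fun H hH => ?_) (iInf₂_le Hstar hHstar)
    by_cases hSH : (∫⁻ z in Set.Ioi (0:ℝ),
        ENNReal.ofReal (astar / 2 * H z ^ 2 + H z) ∂F.measure) = ⊤
    · have : Jfun F.measure Fhat.measure θ astar H = ⊤ := by
        rw [Jfun, hSH]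
        exact Jtop (hBfin H hH)
      rw [this]
      exact le_top
    · have aemH : AEMeasurable H (F.measure.restrict (Set.Ioi 0)) := adm_aemeas hH _
      have aeμSH : 0 ≤ᵐ[F.measure.restrict (Set.Ioi 0)]
          (fun z => astar / 2 * H z ^ 2 + H z) := by
        refine ae_nonneg_Ioi fun z hz => ?_
        have h0 := adm_nonneg hH (le_of_lt hz)
        nlinarith [sq_nonneg (H z)]
      have aeνH : (0:ℝ → ℝ) ≤ᵐ[Fhat.measure.restrict (Set.Ioi 0)] H :=
        ae_nonneg_Ioi fun z hz => adm_nonneg hH (le_of_lt hz)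
      have aemSH : AEMeasurable (fun z => astar / 2 * H z ^ 2 + H z)
          (F.measure.restrict (Set.Ioi 0)) := by
        refine (((aemH.mul aemH).const_mul (astar / 2)).add aemH).congr ?_
        exact ae_of_all _ fun z => by simp only [Pi.add_apply, Pi.mul_apply]; ring
      have iSH : Integrable (fun z => astar / 2 * H z ^ 2 + H z)
          (F.measure.restrict (Set.Ioi 0)) :=
        integrable_of_lint aemSH aeμSH (lt_top_iff_ne_top.2 hSH)
      have iH1 : Integrable H (F.measure.restrict (Set.Ioi 0)) := hintμ _ hH
      have iνH : Integrable H (Fhat.measure.restrict (Set.Ioi 0)) := hintν _ hH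
      have iH2 : Integrable (fun z => H z ^ 2) (F.measure.restrict (Set.Ioi 0)) := by
        refine Integrable.mono' (iSH.const_mul (2 / astar))
          ((aemH.mul aemH).congr (ae_of_all _ fun z => by simp only [Pi.add_apply, Pi.mul_apply]; ring)).aestronglyMeasurable ?_
        filter_upwards [ae_restrict_mem measurableSet_Ioi] with z hz
        have h0 := adm_nonneg hH (le_of_lt hz)
        rw [Real.norm_eq_abs, abs_of_nonneg (sq_nonneg _)]
        have hexp : 2 / astar * (astar / 2 * H z ^ 2 + H z)
            = H z ^ 2 + 2 / astar * H z := by field_simp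
        rw [hexp]
        have : 0 ≤ 2 / astar * H z := by positivity
        linarith
      have aeμTH : 0 ≤ᵐ[F.measure.restrict (Set.Ioi 0)]
          (fun z => H z * (astar * Hstar z + 1)) := by
        refine ae_nonneg_Ioi fun z hz => ?_
        have h0 := adm_nonneg hH (le_of_lt hz)
        have h1 := adm_nonneg hHstar (le_of_lt hz)
        have h2 : (0:ℝ) ≤ astar * Hstar z + 1 := by nlinarith [mul_nonneg hastar_pos.le h1]
        exact mul_nonneg h0 h2
      have iTH : Integrable (fun z => H z * (astar * Hstar z + 1))
          (F.measure.restrict (Set.Ioi 0)) := by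
        refine Integrable.mono'
          ((iH2.const_mul (astar / 2)).add ((iu2.const_mul (astar / 2)).add iH1))
          (aemH.mul ((aemStar.const_mul astar).add aemeasurable_const)).aestronglyMeasurable ?_
        filter_upwards [ae_restrict_mem measurableSet_Ioi] with z hz
        have h0 := adm_nonneg hH (le_of_lt hz)
        have h1 := adm_nonneg hHstar (le_of_lt hz)
        have h2 : (0:ℝ) ≤ astar * Hstar z + 1 := by
          nlinarith [mul_nonneg hastar_pos.le h1]
        rw [Real.norm_eq_abs, abs_of_nonneg (mul_nonneg h0 h2)]
        show H z * (astar * Hstar z + 1)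
          ≤ astar / 2 * H z ^ 2 + (astar / 2 * Hstar z ^ 2 + H z)
        nlinarith [mul_nonneg hastar_pos.le (sq_nonneg (H z - Hstar z))]
      -- variational inequality in real form
      have hVIr : (∫ z, Hstar z * (astar * Hstar z + 1) ∂(F.measure.restrict (Set.Ioi 0)))
          - (1 + θ) * ∫ z, Hstar z ∂(Fhat.measure.restrict (Set.Ioi 0))
          ≤ (∫ z, H z * (astar * Hstar z + 1) ∂(F.measure.restrict (Set.Ioi 0)))
          - (1 + θ) * ∫ z, H z ∂(Fhat.measure.restrict (Set.Ioi 0)) := by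
        have h := hVI H hH
        rw [Jreal hc0 iTst aeμTst iνstar aeνstar, Jreal hc0 iTH aeμTH iνH aeνH] at h
        exact EReal.coe_le_coe_iff.1 h
      -- pointwise convexity inequality
      have iL : Integrable (fun z => (astar / 2 * Hstar z ^ 2 + Hstar z)
          + H z * (astar * Hstar z + 1)) (F.measure.restrict (Set.Ioi 0)) := iSst.add iTH
      have iR : Integrable (fun z => (astar / 2 * H z ^ 2 + H z)
          + Hstar z * (astar * Hstar z + 1)) (F.measure.restrict (Set.Ioi 0)) := iSH.add iTst
      have ikey : (∫ z, ((astar / 2 * Hstar z ^ 2 + Hstar z)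
            + H z * (astar * Hstar z + 1)) ∂(F.measure.restrict (Set.Ioi 0)))
          ≤ ∫ z, ((astar / 2 * H z ^ 2 + H z)
            + Hstar z * (astar * Hstar z + 1)) ∂(F.measure.restrict (Set.Ioi 0)) := by
        refine integral_mono_ae iL iR (ae_of_all _ fun z => ?_)
        nlinarith [sq_nonneg (H z - Hstar z), mul_nonneg hastar_pos.le
          (sq_nonneg (H z - Hstar z))]
      rw [integral_add iSst iTH, integral_add iSH iTst] at ikey
      -- conclude
      have e1 : Jfun F.measure Fhat.measure θ astar Hstar
          = (((∫ z, (astar / 2 * Hstar z ^ 2 + Hstar z) ∂(F.measure.restrict (Set.Ioi 0)))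
              - (1 + θ) * ∫ z, Hstar z ∂(Fhat.measure.restrict (Set.Ioi 0)) : ℝ) : EReal) := by
        simp only [Jfun]
        exact Jreal hc0 iSst aeμSst iνstar aeνstar
      have e2 : Jfun F.measure Fhat.measure θ astar H
          = (((∫ z, (astar / 2 * H z ^ 2 + H z) ∂(F.measure.restrict (Set.Ioi 0)))
              - (1 + θ) * ∫ z, H z ∂(Fhat.measure.restrict (Set.Ioi 0)) : ℝ) : EReal) := by
        simp only [Jfun]
        exact Jreal hc0 iSH aeμSH iνH aeνH
      rw [e1, e2]
      exact EReal.coe_le_coe_iff.2 (by linarith [hVIr, ikey])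
end
end

section
/- Suppose g(p) = p for all p ∈ [0,1] and θ₀ > 0, and the standing assumption holds (which here reads 0 < E[Z] < π < (1+θ₀)·E[Z] with E[Z] = ∫_{(0,∞)} z dμ_F(z)). Then there exists d* > 0 such that H(z) = min{d*, z} satisfies J_{a*}(H) = v(a*); that is, the optimal reinsurance contract is a stop-loss contract with indemnity I*(z) = (z − d*)⁺. Moreover a* = θ₀/d*. -/
open MeasureTheory Set Filter Topology
open scoped ENNReal

noncomputable section

/-- if g is the identity on [0,1] and θ0 > 0, then under the standing
assumption the optimal contract is a stop-loss contract, with deductible d* and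
a* = θ0 / d*. -/
theorem stmt_12
    (F Fhat : StieltjesFunction ℝ) (g : ℝ → ℝ) (θ0 θ : ℝ)
    (hF_neg : ∀ z : ℝ, z < 0 → F z = 0)
    (hF_top : Tendsto (fun z => F z) atTop (nhds 1))
    (hg_mono : MonotoneOn g (Set.Icc 0 1))
    (hg_left : ∀ p ∈ Set.Ioc (0:ℝ) 1, Tendsto g (nhdsWithin p (Set.Iio p)) (nhds (g p)))
    (hg_zero : g 0 = 0)
    (hg_zero' : Tendsto g (nhdsWithin 0 (Set.Ioi 0)) (nhds 0))
    (hg_one : g 1 = 1)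
    (hg_pos : 0 < g (1 - F 0))
    (hθ0 : -1 < θ0)
    (hθ : θ = (1 + θ0) * g (1 - F 0) - 1)
    (hFhat : ∀ z : ℝ, Fhat z = if z < 0 then 0 else 1 - g (1 - F z) / g (1 - F 0))
    (hFhat_top : Tendsto (fun z => Fhat z) atTop (nhds 1))
    (prem : ℝ) (hprem_pos : 0 < prem)
    (hEZ_pos : 0 < ∫⁻ z in Set.Ioi (0:ℝ), ENNReal.ofReal z ∂F.measure)
    (hEZ_lt : (∫⁻ z in Set.Ioi (0:ℝ), ENNReal.ofReal z ∂F.measure) < ENNReal.ofReal prem)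
    (hprem_lt : ENNReal.ofReal prem <
        ENNReal.ofReal (1 + θ) * ∫⁻ z in Set.Ioi (0:ℝ), ENNReal.ofReal z ∂Fhat.measure)
    (hfin : ENNReal.ofReal (1 + θ) *
        (∫⁻ z in Set.Ioi (0:ℝ), ENNReal.ofReal z ∂Fhat.measure) < ⊤)
    (astar : ℝ) (hastar_pos : 0 < astar)
    (hastar : vfun F.measure Fhat.measure θ astar =
        ((prem - (ENNReal.ofReal (1 + θ) *
          (∫⁻ z in Set.Ioi (0:ℝ), ENNReal.ofReal z ∂Fhat.measure)).toReal : ℝ) : EReal))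
    (hg_id : ∀ p ∈ Set.Icc (0:ℝ) 1, g p = p)
    (hθ0_pos : 0 < θ0) :
    ∃ dstar : ℝ, 0 < dstar ∧
      Jfun F.measure Fhat.measure θ astar (fun z => min dstar z) =
        vfun F.measure Fhat.measure θ astar ∧
      astar = θ0 / dstar := by
  classical
  set d : ℝ := θ0 / astar with hd_def
  have hd : 0 < d := div_pos hθ0_pos hastar_pos
  set Hs : ℝ → ℝ := fun z => min d z with hHs_def
  -- basic facts about F
  have hFnn : ∀ z : ℝ, 0 ≤ F z := by
    intro z
    rcases lt_or_ge z 0 with hz | hz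
    · rw [hF_neg z hz]
    · rw [← hF_neg (-1) (by norm_num)]
      exact F.mono (by linarith)
  have hFle1 : ∀ z : ℝ, F z ≤ 1 := fun z => F.mono.ge_of_tendsto hF_top z
  set c : ℝ := 1 - F 0 with hc_def
  have hcIcc : (1 : ℝ) - F 0 ∈ Set.Icc (0:ℝ) 1 := ⟨by linarith [hFle1 0], by linarith [hFnn 0]⟩
  have hgc : g (1 - F 0) = c := hg_id _ hcIcc
  have hcpos : 0 < c := by rw [hgc] at hg_pos; exact hg_pos
  have hθ' : 1 + θ = (1 + θ0) * c := by rw [hθ, hgc]; ring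
  have h10 : (0:ℝ) ≤ 1 + θ0 := by linarith
  -- Fhat on [0, ∞)
  have hFhat' : ∀ z : ℝ, 0 ≤ z → Fhat z = (F z - F 0) / c := by
    intro z hz
    have hzIcc : (1 : ℝ) - F z ∈ Set.Icc (0:ℝ) 1 := ⟨by linarith [hFle1 z], by linarith [hFnn z]⟩
    rw [hFhat z, if_neg (not_lt.2 hz), hgc, hg_id _ hzIcc]
    rw [hc_def]
    rw [← hc_def, eq_div_iff hcpos.ne', sub_mul, div_mul_cancel₀ _ hcpos.ne', hc_def]; ring
  -- the measures agree (up to scaling by 1 - F 0) on (0, ∞)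
  have hmeas : Fhat.measure.restrict (Set.Ioi 0)
      = (ENNReal.ofReal c)⁻¹ • F.measure.restrict (Set.Ioi 0) := by
    refine MeasureTheory.Measure.ext_of_Ioc' _ _ (fun a b _ => ?_) (fun a b _ => ?_)
    · rw [Measure.restrict_apply measurableSet_Ioc]
      exact ((measure_mono Set.inter_subset_left).trans_lt
        (by rw [Fhat.measure_Ioc]; exact ENNReal.ofReal_lt_top)).ne
    · rw [Measure.restrict_apply measurableSet_Ioc, Measure.smul_apply,
        Measure.restrict_apply measurableSet_Ioc, Set.Ioc_inter_Ioi,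
        Fhat.measure_Ioc, F.measure_Ioc, smul_eq_mul]
      set a' : ℝ := a ⊔ 0 with ha'_def
      have ha'0 : 0 ≤ a' := le_sup_right
      rcases le_or_gt b a' with hba | hba
      · have h1 : Fhat b - Fhat a' ≤ 0 := by linarith [Fhat.mono hba]
        have h2 : F b - F a' ≤ 0 := by linarith [F.mono hba]
        rw [ENNReal.ofReal_eq_zero.2 h1, ENNReal.ofReal_eq_zero.2 h2, mul_zero]
      · have hb0 : 0 ≤ b := le_trans ha'0 hba.le
        rw [hFhat' b hb0, hFhat' a' ha'0]
        have heq : (F b - F 0) / c - (F a' - F 0) / c = (F b - F a') / c := by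
          field_simp
          ring
        rw [heq, ENNReal.ofReal_div_of_pos hcpos, ENNReal.div_eq_inv_mul]
  -- rewrite the second (Fhat) integral as an F-integral
  have hB : ∀ G : ℝ → ℝ,
      ENNReal.ofReal (1 + θ) * ∫⁻ z in Set.Ioi (0:ℝ), ENNReal.ofReal (G z) ∂Fhat.measure
      = ENNReal.ofReal (1 + θ0) * ∫⁻ z in Set.Ioi (0:ℝ), ENNReal.ofReal (G z) ∂F.measure := by
    intro G
    rw [hθ', ENNReal.ofReal_mul h10]
    have h1 : (∫⁻ z in Set.Ioi (0:ℝ), ENNReal.ofReal (G z) ∂Fhat.measure)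
        = (ENNReal.ofReal c)⁻¹ * ∫⁻ z in Set.Ioi (0:ℝ), ENNReal.ofReal (G z) ∂F.measure := by
      rw [hmeas, lintegral_smul_measure, smul_eq_mul]
    rw [h1, ← mul_assoc, mul_assoc (ENNReal.ofReal (1 + θ0)),
      ENNReal.mul_inv_cancel (by simpa using hcpos) ENNReal.ofReal_ne_top, mul_one]
  -- admissible functions are dominated by the identity on (0, ∞)
  have hdom : ∀ H ∈ Adm, ∀ z : ℝ, 0 < z → H z ≤ z := by
    rintro H ⟨h0, hnn, hmono, hlip⟩ z hz
    have h1 := hlip.dist_le_mul z (Set.mem_Ici.2 hz.le) 0 (Set.mem_Ici.2 le_rfl)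
    rw [h0, Real.dist_eq, Real.dist_eq, sub_zero, sub_zero] at h1
    calc H z ≤ |H z| := le_abs_self _
      _ ≤ 1 * |z| := by exact_mod_cast h1
      _ = z := by rw [one_mul, abs_of_pos hz]
  -- finiteness of the second term in `Jfun`
  have hBfin : ∀ G : ℝ → ℝ, (∀ z : ℝ, 0 < z → G z ≤ z) →
      ENNReal.ofReal (1 + θ) *
        (∫⁻ z in Set.Ioi (0:ℝ), ENNReal.ofReal (G z) ∂Fhat.measure) ≠ ⊤ := by
    intro G hG
    refine (lt_of_le_of_lt ?_ hfin).ne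
    exact mul_le_mul_right (setLIntegral_mono' measurableSet_Ioi fun z hz =>
      ENNReal.ofReal_le_ofReal (hG z hz)) _
  -- the stop-loss contract is admissible
  have hHsAdm : Hs ∈ Adm := by
    refine ⟨min_eq_right hd.le, fun z hz => le_min hd.le hz,
      fun x _ y _ hxy => min_le_min le_rfl hxy, ?_⟩
    have hl : LipschitzWith 1 Hs := by
      have h := ((LipschitzWith.const d).weaken zero_le_one).min (LipschitzWith.id (α := ℝ))
      simpa [max_self, id] using h
    exact hl.lipschitzOnWith
  have had : astar * d = θ0 := by
    rw [hd_def]; field_simp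
  -- key comparison : Jfun at Hs is below Jfun at any admissible H
  have key : ∀ H ∈ Adm, Jfun F.measure Fhat.measure θ astar Hs
      ≤ Jfun F.measure Fhat.measure θ astar H := by
    intro H hH
    have hdomH := hdom H hH
    obtain ⟨h0, hnn, hmono, hlip⟩ := hH
    simp only [Jfun]
    set A1 : ℝ≥0∞ := ∫⁻ z in Set.Ioi (0:ℝ),
      ENNReal.ofReal (astar / 2 * Hs z ^ 2 + Hs z) ∂F.measure with hA1
    set A2 : ℝ≥0∞ := ∫⁻ z in Set.Ioi (0:ℝ),
      ENNReal.ofReal (astar / 2 * H z ^ 2 + H z) ∂F.measure with hA2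
    set B1 : ℝ≥0∞ := ENNReal.ofReal (1 + θ) *
      ∫⁻ z in Set.Ioi (0:ℝ), ENNReal.ofReal (Hs z) ∂Fhat.measure with hB1
    set B2 : ℝ≥0∞ := ENNReal.ofReal (1 + θ) *
      ∫⁻ z in Set.Ioi (0:ℝ), ENNReal.ofReal (H z) ∂Fhat.measure with hB2
    have hB1fin : B1 ≠ ⊤ := hBfin Hs (fun z _ => min_le_right d z)
    have hB2fin : B2 ≠ ⊤ := hBfin H hdomH
    -- rewrite constants into the integrals
    have e1 : B2 = ∫⁻ z in Set.Ioi (0:ℝ),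
        ENNReal.ofReal ((1 + θ0) * H z) ∂F.measure := by
      rw [hB2, hB H]
      simp_rw [ENNReal.ofReal_mul h10]
      exact (lintegral_const_mul' _ _ ENNReal.ofReal_ne_top).symm
    have e2 : B1 = ∫⁻ z in Set.Ioi (0:ℝ),
        ENNReal.ofReal ((1 + θ0) * Hs z) ∂F.measure := by
      rw [hB1, hB Hs]
      simp_rw [ENNReal.ofReal_mul h10]
      exact (lintegral_const_mul' _ _ ENNReal.ofReal_ne_top).symm
    -- the pointwise inequality
    have hpt : ∀ z ∈ Set.Ioi (0:ℝ),
        ENNReal.ofReal (astar / 2 * Hs z ^ 2 + Hs z) + ENNReal.ofReal ((1 + θ0) * H z)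
        ≤ ENNReal.ofReal (astar / 2 * H z ^ 2 + H z) + ENNReal.ofReal ((1 + θ0) * Hs z) := by
      intro z hz
      have hz0 : (0:ℝ) < z := hz
      have hh0 : 0 ≤ H z := hnn z hz0.le
      have hhz : H z ≤ z := hdomH z hz0
      have hs0 : 0 ≤ Hs z := le_min hd.le hz0.le
      have hsd : Hs z ≤ d := min_le_left _ _
      rw [← ENNReal.ofReal_add (by positivity) (by positivity),
        ← ENNReal.ofReal_add (by positivity) (by positivity)]
      refine ENNReal.ofReal_le_ofReal ?_
      rcases le_or_gt (H z) (Hs z) with hcase | hcase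
      · nlinarith [mul_nonneg (mul_nonneg hastar_pos.le (sub_nonneg.2 hcase))
          (show (0:ℝ) ≤ 2 * d - Hs z - H z by linarith)]
      · have hsz : Hs z = d := by
          rcases le_total d z with h1 | h1
          · exact min_eq_left h1
          · exfalso
            have : Hs z = z := min_eq_right h1
            rw [this] at hcase; linarith
        nlinarith [mul_nonneg (mul_nonneg hastar_pos.le (sub_nonneg.2 hcase.le))
          (show (0:ℝ) ≤ Hs z + H z - 2 * d by rw [hsz]; linarith)]
    -- measurability of the Hs-side integrand
    have hmeasHs : AEMeasurable (fun z => ENNReal.ofReal ((1 + θ0) * Hs z))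
        (F.measure.restrict (Set.Ioi 0)) := by
      refine Measurable.aemeasurable ?_
      exact (ENNReal.continuous_ofReal.comp
        (continuous_const.mul (continuous_const.min continuous_id))).measurable
    -- the core ENNReal inequality
    have hcore : A1 + B2 ≤ A2 + B1 := by
      rw [e1, e2]
      calc A1 + ∫⁻ z in Set.Ioi (0:ℝ), ENNReal.ofReal ((1 + θ0) * H z) ∂F.measure
          ≤ ∫⁻ z in Set.Ioi (0:ℝ), (ENNReal.ofReal (astar / 2 * Hs z ^ 2 + Hs z)
              + ENNReal.ofReal ((1 + θ0) * H z)) ∂F.measure := le_lintegral_add _ _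
        _ ≤ ∫⁻ z in Set.Ioi (0:ℝ), (ENNReal.ofReal (astar / 2 * H z ^ 2 + H z)
              + ENNReal.ofReal ((1 + θ0) * Hs z)) ∂F.measure :=
            lintegral_mono_ae ((ae_restrict_iff' measurableSet_Ioi).2 (ae_of_all _ hpt))
        _ = A2 + ∫⁻ z in Set.Ioi (0:ℝ), ENNReal.ofReal ((1 + θ0) * Hs z) ∂F.measure :=
            lintegral_add_right' _ hmeasHs
    -- conclude in EReal
    have ecoe : ∀ x : ℝ≥0∞, x ≠ ⊤ → ((x : EReal)) = ((x.toReal : ℝ) : EReal) := by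
      intro x hx
      conv_lhs => rw [← ENNReal.ofReal_toReal hx]
      rw [EReal.coe_ennreal_ofReal, max_eq_left ENNReal.toReal_nonneg]
    rcases eq_or_ne A2 ⊤ with hA2top | hA2fin
    · rw [hA2top, EReal.coe_ennreal_top, ecoe B2 hB2fin, EReal.top_sub_coe]
      exact le_top
    · have hA1fin : A1 ≠ ⊤ := by
        refine ne_top_of_le_ne_top (ENNReal.add_ne_top.2 ⟨hA2fin, hB1fin⟩) ?_
        exact le_trans (self_le_add_right _ _) hcore
      rw [ecoe A1 hA1fin, ecoe A2 hA2fin, ecoe B1 hB1fin, ecoe B2 hB2fin,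
        ← EReal.coe_sub, ← EReal.coe_sub, EReal.coe_le_coe_iff]
      have h1 : (A1 + B2).toReal ≤ (A2 + B1).toReal :=
        ENNReal.toReal_mono (ENNReal.add_ne_top.2 ⟨hA2fin, hB1fin⟩) hcore
      rw [ENNReal.toReal_add hA1fin hB2fin, ENNReal.toReal_add hA2fin hB1fin] at h1
      linarith
  refine ⟨d, hd, ?_, by rw [hd_def]; field_simp⟩
  rw [← hHs_def]
  apply le_antisymm
  · unfold vfun
    exact le_iInf₂ key
  · unfold vfun
    exact iInf₂_le Hs hHsAdm
end
end

section
/- Let θ₀ > 0 and π satisfy 0 < (1+θ₀)·E[Z] − π < θ₀·E[Z], where 0 < E[Z] = ∫_{(0,∞)} z dμ_F(z) < ∞. Define ψ(d, z) := (2 − min{1, z/d})·min{d, z} for d > 0 and z ≥ 0. Then there exists d* > 0 such that (θ₀/2)·∫_{(0,∞)} ψ(d*, z) dμ_F(z) = (1+θ₀)·E[Z] − π. -/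
open MeasureTheory Set Filter Topology
open scoped ENNReal

noncomputable section

/-- existence of a deductible d* > 0 solving
(θ0/2)·∫ ψ(d*,z) dμ_F = (1+θ0)·E[Z] − π, where
ψ(d,z) = (2 − min{1, z/d})·min{d,z}. -/
theorem stmt_13
    (F : StieltjesFunction ℝ)
    (hF_neg : ∀ z : ℝ, z < 0 → F z = 0)
    (hF_top : Tendsto (fun z => F z) atTop (nhds 1))
    (θ0 prem : ℝ) (hθ0_pos : 0 < θ0)
    (hEZ_pos : 0 < ∫⁻ z in Set.Ioi (0:ℝ), ENNReal.ofReal z ∂F.measure)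
    (hEZ_fin : (∫⁻ z in Set.Ioi (0:ℝ), ENNReal.ofReal z ∂F.measure) < ⊤)
    (h_lb : 0 < (1 + θ0) * (∫⁻ z in Set.Ioi (0:ℝ), ENNReal.ofReal z ∂F.measure).toReal - prem)
    (h_ub : (1 + θ0) * (∫⁻ z in Set.Ioi (0:ℝ), ENNReal.ofReal z ∂F.measure).toReal - prem <
        θ0 * (∫⁻ z in Set.Ioi (0:ℝ), ENNReal.ofReal z ∂F.measure).toReal) :
    ∃ dstar : ℝ, 0 < dstar ∧
      θ0 / 2 * (∫⁻ z in Set.Ioi (0:ℝ),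
          ENNReal.ofReal ((2 - min 1 (z / dstar)) * min dstar z) ∂F.measure).toReal =
        (1 + θ0) * (∫⁻ z in Set.Ioi (0:ℝ), ENNReal.ofReal z ∂F.measure).toReal - prem := by
  set E' : ℝ≥0∞ := ∫⁻ z in Set.Ioi (0:ℝ), ENNReal.ofReal z ∂F.measure with hE'
  set E : ℝ := E'.toReal with hE
  set c : ℝ := (1 + θ0) * E - prem with hc
  -- measurability of the integrand
  have hmeas : ∀ d : ℝ, Measurable fun z : ℝ =>
      ENNReal.ofReal ((2 - min 1 (z / d)) * min d z) := by
    intro d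
    apply ENNReal.measurable_ofReal.comp
    apply Continuous.measurable
    exact ((continuous_const.sub (continuous_const.min
      (continuous_id.div_const d))).mul (continuous_const.min continuous_id))
  -- pointwise bound by 2z
  have hψ_le : ∀ (d z : ℝ), 0 < z →
      (2 - min 1 (z / d)) * min d z ≤ 2 * z := by
    intro d z hz
    rcases le_or_gt d 0 with hd | hd
    · have h1 : (0:ℝ) ≤ 2 - min 1 (z / d) := by
        have := min_le_left (1:ℝ) (z / d); linarith
      have h2 : min d z ≤ 0 := le_trans (min_le_left d z) hd
      nlinarith
    · have hzd : 0 < z / d := div_pos hz hd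
      have h1 : (0:ℝ) ≤ min 1 (z / d) := le_min (by norm_num) hzd.le
      have h2 : 2 - min 1 (z / d) ≤ 2 := by linarith
      have h3 : (0:ℝ) ≤ 2 - min 1 (z / d) := by
        have := min_le_left (1:ℝ) (z / d); linarith
      have h4 : min d z ≤ z := min_le_right d z
      have h5 : (0:ℝ) ≤ min d z := le_min hd.le hz.le
      nlinarith
  have hbound : ∀ d : ℝ, ∀ᵐ z ∂(F.measure.restrict (Set.Ioi (0:ℝ))),
      ENNReal.ofReal ((2 - min 1 (z / d)) * min d z) ≤ ENNReal.ofReal (2 * z) := by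
    intro d
    filter_upwards [ae_restrict_mem measurableSet_Ioi] with z hz
    exact ENNReal.ofReal_le_ofReal (hψ_le d z hz)
  have h2E : (∫⁻ z in Set.Ioi (0:ℝ), ENNReal.ofReal (2 * z) ∂F.measure) = 2 * E' := by
    rw [hE']
    rw [← lintegral_const_mul 2 ENNReal.measurable_ofReal]
    congr 1
    ext z
    rw [ENNReal.ofReal_mul (by norm_num : (0:ℝ) ≤ 2)]
    norm_num
  have h2E_fin : (∫⁻ z in Set.Ioi (0:ℝ), ENNReal.ofReal (2 * z) ∂F.measure) ≠ ⊤ := by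
    rw [h2E]
    exact ENNReal.mul_ne_top (by norm_num) hEZ_fin.ne
  have hfin : ∀ d : ℝ,
      (∫⁻ z in Set.Ioi (0:ℝ), ENNReal.ofReal ((2 - min 1 (z / d)) * min d z) ∂F.measure) ≠ ⊤ :=
    fun d => (lt_of_le_of_lt (lintegral_mono_ae (hbound d)) h2E_fin.lt_top).ne
  -- the function G
  set I : ℝ → ℝ≥0∞ := fun d =>
    ∫⁻ z in Set.Ioi (0:ℝ), ENNReal.ofReal ((2 - min 1 (z / d)) * min d z) ∂F.measure with hI
  set G : ℝ → ℝ := fun d => θ0 / 2 * (I d).toReal with hG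
  -- continuity of I (hence G) at each d0 > 0
  have hI_cont : ∀ d0 : ℝ, 0 < d0 → Tendsto I (𝓝 d0) (𝓝 (I d0)) := by
    intro d0 hd0
    apply tendsto_lintegral_filter_of_dominated_convergence
      (fun z => ENNReal.ofReal (2 * z))
    · exact Eventually.of_forall hmeas
    · exact Eventually.of_forall hbound
    · exact h2E_fin
    · filter_upwards [ae_restrict_mem measurableSet_Ioi] with z hz
      apply (ENNReal.continuous_ofReal.tendsto _).comp
      have : ContinuousAt (fun d : ℝ => (2 - min 1 (z / d)) * min d z) d0 := by
        apply ContinuousAt.mul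
        · exact continuousAt_const.sub (continuousAt_const.min
            (continuousAt_const.div continuousAt_id hd0.ne'))
        · exact continuousAt_id.min continuousAt_const
      exact this
  have hG_cont : ∀ d0 : ℝ, 0 < d0 → ContinuousAt G d0 := by
    intro d0 hd0
    apply Tendsto.const_mul
    exact (ENNReal.tendsto_toReal (hfin d0)).comp (hI_cont d0 hd0)
  -- behavior at infinity
  have hI_top : Tendsto I atTop (𝓝 (2 * E')) := by
    rw [← h2E]
    apply tendsto_lintegral_filter_of_dominated_convergence
      (fun z => ENNReal.ofReal (2 * z))
    · exact Eventually.of_forall hmeas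
    · exact Eventually.of_forall hbound
    · exact h2E_fin
    · filter_upwards [ae_restrict_mem measurableSet_Ioi] with z hz
      apply (ENNReal.continuous_ofReal.tendsto _).comp
      have heq : (fun d : ℝ => (2 - z / d) * z) =ᶠ[atTop]
          (fun d : ℝ => (2 - min 1 (z / d)) * min d z) := by
        filter_upwards [eventually_ge_atTop (max z 1)] with d hd
        have hd1 : (1:ℝ) ≤ d := le_trans (le_max_right z 1) hd
        have hdz : z ≤ d := le_trans (le_max_left z 1) hd
        have h1 : z / d ≤ 1 := by
          rw [div_le_one (by linarith)]; exact hdz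
        rw [min_eq_right h1, min_eq_right hdz]
      apply Tendsto.congr' heq
      have hdiv : Tendsto (fun d : ℝ => z / d) atTop (𝓝 0) :=
        tendsto_const_nhds.div_atTop tendsto_id
      have : Tendsto (fun d : ℝ => (2 - z / d) * z) atTop (𝓝 ((2 - 0) * z)) :=
        (tendsto_const_nhds.sub hdiv).mul tendsto_const_nhds
      simpa using this
  have h2E_toReal : (2 * E').toReal = 2 * E := by
    rw [ENNReal.toReal_mul]; norm_num; rfl
  have hG_top : Tendsto G atTop (𝓝 (θ0 * E)) := by
    have : Tendsto (fun d => θ0 / 2 * (I d).toReal) atTop (𝓝 (θ0 / 2 * (2 * E').toReal)) :=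
      Tendsto.const_mul _ ((ENNReal.tendsto_toReal
        (ENNReal.mul_ne_top (by norm_num) hEZ_fin.ne)).comp hI_top)
    rw [h2E_toReal] at this
    convert this using 2
    ring
  -- the measure of Ioi 0 is at most 1
  have hμ1 : F.measure (Set.Ioi (0:ℝ)) ≤ 1 := by
    have hbot : Tendsto (fun z => F z) atBot (𝓝 0) := by
      apply Tendsto.congr' _ tendsto_const_nhds
      filter_upwards [eventually_lt_atBot (0:ℝ)] with z hz
      exact (hF_neg z hz).symm
    calc F.measure (Set.Ioi (0:ℝ)) ≤ F.measure Set.univ := measure_mono (subset_univ _)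
      _ = ENNReal.ofReal (1 - 0) := F.measure_univ hbot hF_top
      _ ≤ 1 := by norm_num
  -- small endpoint
  set a : ℝ := c / (2 * θ0) with ha
  have hc_pos : 0 < c := h_lb
  have ha_pos : 0 < a := div_pos hc_pos (by linarith)
  have hGa : G a ≤ c / 2 := by
    have hIa : I a ≤ ENNReal.ofReal (2 * a) := by
      have hle : ∀ᵐ z ∂(F.measure.restrict (Set.Ioi (0:ℝ))),
          ENNReal.ofReal ((2 - min 1 (z / a)) * min a z) ≤ ENNReal.ofReal (2 * a) := by
        filter_upwards [ae_restrict_mem measurableSet_Ioi] with z hz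
        apply ENNReal.ofReal_le_ofReal
        have hza : 0 < z / a := div_pos hz ha_pos
        have h1 : (0:ℝ) ≤ min 1 (z / a) := le_min (by norm_num) hza.le
        have h2 : 2 - min 1 (z / a) ≤ 2 := by linarith
        have h3 : (0:ℝ) ≤ 2 - min 1 (z / a) := by
          have := min_le_left (1:ℝ) (z / a); linarith
        have h4 : min a z ≤ a := min_le_left a z
        have h5 : (0:ℝ) ≤ min a z := le_min ha_pos.le hz.le
        nlinarith
      calc I a ≤ ∫⁻ _ in Set.Ioi (0:ℝ), ENNReal.ofReal (2 * a) ∂F.measure :=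
            lintegral_mono_ae hle
        _ = ENNReal.ofReal (2 * a) * F.measure (Set.Ioi (0:ℝ)) := by
            rw [lintegral_const, Measure.restrict_apply_univ]
        _ ≤ ENNReal.ofReal (2 * a) * 1 := by
            exact mul_le_mul_right hμ1 _
        _ = ENNReal.ofReal (2 * a) := mul_one _
    have hIa' : (I a).toReal ≤ 2 * a :=
      le_trans (ENNReal.toReal_mono ENNReal.ofReal_ne_top hIa)
        (le_of_eq (ENNReal.toReal_ofReal (by positivity)))
    have : G a ≤ θ0 / 2 * (2 * a) := by
      apply mul_le_mul_of_nonneg_left hIa' (by positivity)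
    calc G a ≤ θ0 / 2 * (2 * a) := this
      _ = c / 2 := by rw [ha]; field_simp
  -- large endpoint
  have hcθE : c < θ0 * E := h_ub
  have hb : ∃ b, c ≤ G b ∧ a ≤ b := by
    have h1 : ∀ᶠ d in atTop, c < G d := hG_top.eventually (eventually_gt_nhds hcθE)
    have h2 : ∀ᶠ d in atTop, a ≤ d := eventually_ge_atTop a
    obtain ⟨b, hb1, hb2⟩ := (h1.and h2).exists
    exact ⟨b, hb1.le, hb2⟩
  obtain ⟨b, hGb, hab⟩ := hb
  -- apply the intermediate value theorem on [a, b]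
  have hcont : ContinuousOn G (Set.Icc a b) := fun x hx =>
    (hG_cont x (lt_of_lt_of_le ha_pos hx.1)).continuousWithinAt
  have hmem : c ∈ Set.Icc (G a) (G b) := ⟨le_trans hGa (by linarith), hGb⟩
  obtain ⟨dstar, hd_mem, hGd⟩ := intermediate_value_Icc hab hcont hmem
  exact ⟨dstar, lt_of_lt_of_le ha_pos hd_mem.1, hGd⟩
end
end

section
/- Under the standing assumption and the quantile assumption, the double-obstacle ODE admits a unique solution in C²⁻[m₀,1]: if Ψ₁, Ψ₂ ∈ C²⁻[m₀,1] both solve the double-obstacle ODE, then Ψ₁ = Ψ₂ on [m₀,1]. -/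
open MeasureTheory Set Filter Topology
open scoped ENNReal

noncomputable section

/-- Ψ belongs to `C²⁻[m0, 1]`: Ψ is differentiable on `[m0,1]` with derivative `Ψd`,
and `Ψd` is absolutely continuous on `[m0,1]` with (a.e.) derivative `Ψdd`. -/
def IsC2m (m0 : ℝ) (Ψ Ψd Ψdd : ℝ → ℝ) : Prop :=
  (∀ p ∈ Set.Icc m0 1, HasDerivWithinAt Ψ (Ψd p) (Set.Icc m0 1) p) ∧
  IntegrableOn Ψdd (Set.Icc m0 1) ∧
  (∀ p ∈ Set.Icc m0 1, Ψd p = Ψd m0 + ∫ t in m0..p, Ψdd t)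

/-- The double-obstacle ODE:
`min{max{Ψ'' − a*·h, 1 − p − (1+θ0)·g(1−p) − Ψ}, Ψ''} = 0` a.e. on `(m0,1)`, with
boundary conditions `Ψ(1) = 0` and `Ψ'(m0) = 0`. -/
def SolvesDO (m0 astar θ0 : ℝ) (g h Ψ Ψd Ψdd : ℝ → ℝ) : Prop :=
  (∀ᵐ p ∂(volume.restrict (Set.Ioo m0 1)),
      min (max (Ψdd p - astar * h p) (1 - p - (1 + θ0) * g (1 - p) - Ψ p)) (Ψdd p) = 0) ∧
  Ψ 1 = 0 ∧ Ψd m0 = 0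

lemma aux_le (m0 astar θ0 : ℝ) (g h : ℝ → ℝ)
    (hastar : 0 < astar)
    (hh : ∀ᵐ p ∂(volume.restrict (Set.Ioo m0 1)), 0 < h p)
    (Ψ₁ Ψ₁d Ψ₁dd Ψ₂ Ψ₂d Ψ₂dd : ℝ → ℝ)
    (hC1 : IsC2m m0 Ψ₁ Ψ₁d Ψ₁dd) (hD1 : SolvesDO m0 astar θ0 g h Ψ₁ Ψ₁d Ψ₁dd)
    (hC2 : IsC2m m0 Ψ₂ Ψ₂d Ψ₂dd) (hD2 : SolvesDO m0 astar θ0 g h Ψ₂ Ψ₂d Ψ₂dd) :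
    ∀ p ∈ Set.Icc m0 1, Ψ₁ p ≤ Ψ₂ p := by
  by_contra hcon
  push_neg at hcon
  obtain ⟨p₀, hp₀, hWlt⟩ := hcon
  set W : ℝ → ℝ := fun p => Ψ₁ p - Ψ₂ p with hWdef
  set Wd : ℝ → ℝ := fun p => Ψ₁d p - Ψ₂d p with hWddef
  set Wdd : ℝ → ℝ := fun p => Ψ₁dd p - Ψ₂dd p with hWdddef
  have hWpos : 0 < W p₀ := sub_pos.2 hWlt
  have hm0p : m0 ≤ p₀ := hp₀.1
  have hp01 : p₀ ≤ 1 := hp₀.2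
  -- basic facts about W
  have hWderiv : ∀ p ∈ Set.Icc m0 1, HasDerivWithinAt W (Wd p) (Set.Icc m0 1) p :=
    fun p hp => (hC1.1 p hp).sub (hC2.1 p hp)
  have hWcont : ContinuousOn W (Set.Icc m0 1) :=
    fun p hp => (hWderiv p hp).continuousWithinAt
  have hWdd_int : IntegrableOn Wdd (Set.Icc m0 1) := hC1.2.1.sub hC2.2.1
  have hIntWdd : ∀ q ∈ Set.Icc m0 1, ∀ r ∈ Set.Icc m0 1,
      IntervalIntegrable Wdd volume q r := by
    intro q hq r hr
    exact (hWdd_int.mono_set (Set.uIcc_subset_Icc hq hr)).intervalIntegrable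
  have hIntWdd1 : ∀ q ∈ Set.Icc m0 1, ∀ r ∈ Set.Icc m0 1,
      IntervalIntegrable Ψ₁dd volume q r := by
    intro q hq r hr
    exact (hC1.2.1.mono_set (Set.uIcc_subset_Icc hq hr)).intervalIntegrable
  have hIntWdd2 : ∀ q ∈ Set.Icc m0 1, ∀ r ∈ Set.Icc m0 1,
      IntervalIntegrable Ψ₂dd volume q r := by
    intro q hq r hr
    exact (hC2.2.1.mono_set (Set.uIcc_subset_Icc hq hr)).intervalIntegrable
  have hm01 : m0 ∈ Set.Icc m0 (1:ℝ) := ⟨le_rfl, hm0p.trans hp01⟩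
  have hWd_eq : ∀ p ∈ Set.Icc m0 1, Wd p = Wd m0 + ∫ t in m0..p, Wdd t := by
    intro p hp
    have h1 := hC1.2.2 p hp
    have h2 := hC2.2.2 p hp
    have hsub : (∫ t in m0..p, Wdd t) =
        (∫ t in m0..p, Ψ₁dd t) - ∫ t in m0..p, Ψ₂dd t := by
      rw [← intervalIntegral.integral_sub (hIntWdd1 m0 hm01 p hp) (hIntWdd2 m0 hm01 p hp)]
    simp only [Wd, Wdd] at *
    rw [hsub, h1, h2]; ring
  have hWd0 : Wd m0 = 0 := by simp only [Wd, hD1.2.2, hD2.2.2, sub_zero]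
  have hW1 : W 1 = 0 := by simp only [W, hD1.2.1, hD2.2.1, sub_zero]
  -- the a.e. comparison of second derivatives
  have hae : ∀ᵐ p ∂(volume.restrict (Set.Ioo m0 1)), (Ψ₂ p < Ψ₁ p → 0 ≤ Wdd p) := by
    filter_upwards [hD1.1, hD2.1, hh] with p h1 h2 hp hlt
    have hc : 0 < astar * h p := mul_pos hastar hp
    have h1a : 0 ≤ Ψ₁dd p := by rw [← h1]; exact min_le_right _ _
    rcases le_or_gt (1 - p - (1 + θ0) * g (1 - p)) (Ψ₂ p) with hu | hu
    · -- Ψ₂ above obstacle, hence Ψ₁ too: Ψ₁dd ≥ c ≥ Ψ₂dd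
      have hx1 : astar * h p ≤ Ψ₁dd p := by
        have hmax : 0 ≤ max (Ψ₁dd p - astar * h p) (1 - p - (1 + θ0) * g (1 - p) - Ψ₁ p) := by
          rw [← h1]; exact min_le_left _ _
        rcases max_choice (Ψ₁dd p - astar * h p) (1 - p - (1 + θ0) * g (1 - p) - Ψ₁ p) with
          he | he <;> rw [he] at hmax <;> linarith
      have hx2 : Ψ₂dd p ≤ astar * h p := by
        rcases min_choice (max (Ψ₂dd p - astar * h p) (1 - p - (1 + θ0) * g (1 - p) - Ψ₂ p))
          (Ψ₂dd p) with he | he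
        · have hmax0 : max (Ψ₂dd p - astar * h p) (1 - p - (1 + θ0) * g (1 - p) - Ψ₂ p) = 0 := by
            rw [← he, h2]
          have := le_max_left (Ψ₂dd p - astar * h p) (1 - p - (1 + θ0) * g (1 - p) - Ψ₂ p)
          rw [hmax0] at this; linarith
        · have : Ψ₂dd p = 0 := by rw [← h2, he]
          linarith
      simp only [Wdd]; linarith
    · -- Ψ₂ below obstacle: Ψ₂dd = 0
      have hx2 : Ψ₂dd p = 0 := by
        rcases min_choice (max (Ψ₂dd p - astar * h p) (1 - p - (1 + θ0) * g (1 - p) - Ψ₂ p))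
          (Ψ₂dd p) with he | he
        · exfalso
          have hlt2 : 0 < max (Ψ₂dd p - astar * h p) (1 - p - (1 + θ0) * g (1 - p) - Ψ₂ p) :=
            lt_of_lt_of_le (by linarith) (le_max_right _ _)
          rw [← he, h2] at hlt2; linarith
        · rw [← h2, he]
      simp only [Wdd]; linarith
  have hae' : ∀ᵐ p ∂(volume : Measure ℝ), p ∈ Set.Ioo m0 1 → (Ψ₂ p < Ψ₁ p → 0 ≤ Wdd p) :=
    (ae_restrict_iff' measurableSet_Ioo).1 hae
  -- right boundary point β
  have hSRclosed : IsClosed {q : ℝ | q ∈ Set.Icc p₀ 1 ∧ W q ≤ 0} := by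
    have : {q : ℝ | q ∈ Set.Icc p₀ 1 ∧ W q ≤ 0} = Set.Icc p₀ 1 ∩ W ⁻¹' (Set.Iic 0) := rfl
    rw [this]
    exact (hWcont.mono (Set.Icc_subset_Icc hm0p le_rfl)).preimage_isClosed_of_isClosed
      isClosed_Icc isClosed_Iic
  have hSRne : Set.Nonempty {q : ℝ | q ∈ Set.Icc p₀ 1 ∧ W q ≤ 0} :=
    ⟨1, ⟨hp01, le_rfl⟩, hW1.le⟩
  have hSRbdd : BddBelow {q : ℝ | q ∈ Set.Icc p₀ 1 ∧ W q ≤ 0} :=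
    ⟨p₀, fun q hq => hq.1.1⟩
  set β := sInf {q : ℝ | q ∈ Set.Icc p₀ 1 ∧ W q ≤ 0} with hβdef
  have hβmem : β ∈ {q : ℝ | q ∈ Set.Icc p₀ 1 ∧ W q ≤ 0} :=
    hSRclosed.csInf_mem hSRne hSRbdd
  have hβ1 : β ≤ 1 := hβmem.1.2
  have hWβ : W β ≤ 0 := hβmem.2
  have hp₀β : p₀ < β := by
    rcases lt_or_eq_of_le hβmem.1.1 with h | h
    · exact h
    · exfalso; rw [← h] at hWβ; linarith
  have hposR : ∀ q, p₀ ≤ q → q < β → 0 < W q := by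
    intro q h1 h2
    by_contra hn
    push_neg at hn
    exact absurd (csInf_le hSRbdd ⟨⟨h1, h2.le.trans hβ1⟩, hn⟩) (not_le.2 h2)
  -- left boundary point α
  have hSLclosed : IsClosed (insert m0 {q : ℝ | q ∈ Set.Icc m0 p₀ ∧ W q ≤ 0}) := by
    rw [Set.insert_eq]
    apply IsClosed.union isClosed_singleton
    have : {q : ℝ | q ∈ Set.Icc m0 p₀ ∧ W q ≤ 0} = Set.Icc m0 p₀ ∩ W ⁻¹' (Set.Iic 0) := rfl
    rw [this]
    exact (hWcont.mono (Set.Icc_subset_Icc le_rfl hp01)).preimage_isClosed_of_isClosed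
      isClosed_Icc isClosed_Iic
  have hSLne : Set.Nonempty (insert m0 {q : ℝ | q ∈ Set.Icc m0 p₀ ∧ W q ≤ 0}) :=
    ⟨m0, Set.mem_insert _ _⟩
  have hSLbdd : BddAbove (insert m0 {q : ℝ | q ∈ Set.Icc m0 p₀ ∧ W q ≤ 0}) := by
    refine ⟨p₀, ?_⟩
    rintro q (rfl | hq)
    · exact hm0p
    · exact hq.1.2
  set α := sSup (insert m0 {q : ℝ | q ∈ Set.Icc m0 p₀ ∧ W q ≤ 0}) with hαdef
  have hαmem : α ∈ insert m0 {q : ℝ | q ∈ Set.Icc m0 p₀ ∧ W q ≤ 0} :=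
    hSLclosed.csSup_mem hSLne hSLbdd
  have hm0α : m0 ≤ α := le_csSup hSLbdd (Set.mem_insert _ _)
  have hαle : α ≤ p₀ := by
    apply csSup_le hSLne
    rintro q (rfl | hq)
    · exact hm0p
    · exact hq.1.2
  have hposL : ∀ q, α < q → q ≤ p₀ → 0 < W q := by
    intro q h1 h2
    by_contra hn
    push_neg at hn
    exact absurd (le_csSup hSLbdd (Set.mem_insert_of_mem _ ⟨⟨hm0α.trans h1.le, h2⟩, hn⟩))
      (not_le.2 h1)
  have hposM : ∀ q ∈ Set.Ioo α β, 0 < W q := by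
    intro q hq
    rcases le_or_gt q p₀ with h | h
    · exact hposL q hq.1 h
    · exact hposR q h.le hq.2
  -- monotonicity of Wd on [α, β]
  have hα1 : α ∈ Set.Icc m0 (1:ℝ) := ⟨hm0α, hαle.trans hp01⟩
  have hβmem1 : β ∈ Set.Icc m0 (1:ℝ) := ⟨hm0p.trans hp₀β.le, hβ1⟩
  have hβne : ∀ᵐ p : ℝ ∂(volume : Measure ℝ), p ≠ β := by
    rw [ae_iff]
    have : {p : ℝ | ¬p ≠ β} = {β} := by ext p; simp
    rw [this]
    exact measure_singleton β
  have hqne : ∀ c : ℝ, ∀ᵐ p : ℝ ∂(volume : Measure ℝ), p ≠ c := by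
    intro c
    rw [ae_iff]
    have : {p : ℝ | ¬p ≠ c} = {c} := by ext p; simp
    rw [this]
    exact measure_singleton c
  have hintnonneg : ∀ q r, α ≤ q → q ≤ r → r ≤ β → 0 ≤ ∫ t in q..r, Wdd t := by
    intro q r h1 h2 h3
    apply intervalIntegral.integral_nonneg_of_ae_restrict h2
    have key : ∀ᵐ p ∂(volume.restrict (Set.Icc q r)), 0 ≤ Wdd p := by
      rw [ae_restrict_iff' measurableSet_Icc]
      filter_upwards [hae', hqne q, hqne r] with p hP hpq hpr
      intro hp
      have hq' : q < p := lt_of_le_of_ne hp.1 (Ne.symm hpq)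
      have hr' : p < r := lt_of_le_of_ne hp.2 hpr
      have hpIoo : p ∈ Set.Ioo α β := ⟨lt_of_le_of_lt h1 hq', lt_of_lt_of_le hr' h3⟩
      have hpIoo' : p ∈ Set.Ioo m0 1 :=
        ⟨lt_of_le_of_lt hm0α hpIoo.1, lt_of_lt_of_le hpIoo.2 hβ1⟩
      exact hP hpIoo' (sub_pos.1 (hposM p hpIoo))
    filter_upwards [key] with p hp
    exact hp
  have hMono : ∀ q ∈ Set.Icc α β, ∀ r ∈ Set.Icc α β, q ≤ r → Wd q ≤ Wd r := by
    intro q hq r hr hqr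
    have hq1 : q ∈ Set.Icc m0 (1:ℝ) := ⟨hm0α.trans hq.1, hq.2.trans hβ1⟩
    have hr1 : r ∈ Set.Icc m0 (1:ℝ) := ⟨hm0α.trans hr.1, hr.2.trans hβ1⟩
    have heq := intervalIntegral.integral_interval_sub_left
      (hIntWdd m0 hm01 r hr1) (hIntWdd m0 hm01 q hq1)
    have h1 := hWd_eq q hq1
    have h2 := hWd_eq r hr1
    have h3 := hintnonneg q r hq.1 hqr hr.2
    rw [← heq] at h3
    linarith
  -- interval integrability of Wd on subintervals of [α, β]
  have hWdint : ∀ q r, α ≤ q → q ≤ r → r ≤ β → IntervalIntegrable Wd volume q r := by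
    intro q r h1 h2 h3
    apply MonotoneOn.intervalIntegrable
    intro x hx y hy hxy
    rw [Set.uIcc_of_le h2] at hx hy
    exact hMono x ⟨h1.trans hx.1, hx.2.trans h3⟩ y ⟨h1.trans hy.1, hy.2.trans h3⟩ hxy
  -- FTC
  have hFTC : ∀ q r, m0 ≤ q → q ≤ r → r ≤ 1 → IntervalIntegrable Wd volume q r →
      (∫ t in q..r, Wd t) = W r - W q := by
    intro q r h1 h2 h3 hint
    apply intervalIntegral.integral_eq_sub_of_hasDeriv_right_of_le h2
      (hWcont.mono (Set.Icc_subset_Icc h1 h3)) _ hint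
    intro x hx
    have hx1 : x ∈ Set.Icc m0 1 := ⟨h1.trans hx.1.le, hx.2.le.trans h3⟩
    have hxlt : x < 1 := lt_of_lt_of_le hx.2 h3
    apply (hWderiv x hx1).mono_of_mem_nhdsWithin
    exact mem_of_superset (Ioc_mem_nhdsGT_of_mem ⟨le_refl x, hxlt⟩)
      (fun y hy => ⟨hx1.1.trans hy.1.le, hy.2⟩)
  -- Wd p₀ ≥ 0
  have hp₀αβ : p₀ ∈ Set.Icc α β := ⟨hαle, hp₀β.le⟩
  have hWdp₀ : 0 ≤ Wd p₀ := by
    by_cases hWα : W α ≤ 0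
    · have hαp₀ : α < p₀ := by
        rcases lt_or_eq_of_le hαle with h | h
        · exact h
        · exfalso; rw [h] at hWα; linarith
      have hFTC1 : (∫ t in α..p₀, Wd t) = W p₀ - W α :=
        hFTC α p₀ hm0α hαle hp01 (hWdint α p₀ le_rfl hαle hp₀β.le)
      have hle : (∫ t in α..p₀, Wd t) ≤ ∫ t in α..p₀, (fun _ => Wd p₀) t := by
        apply intervalIntegral.integral_mono_on hαle
          (hWdint α p₀ le_rfl hαle hp₀β.le) intervalIntegrable_const
        intro x hx
        exact hMono x ⟨hx.1, hx.2.trans hp₀β.le⟩ p₀ hp₀αβ hx.2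
      have hconst : (∫ t in α..p₀, (fun _ => Wd p₀) t) = (p₀ - α) * Wd p₀ := by
        rw [intervalIntegral.integral_const, smul_eq_mul]
      rw [hconst] at hle
      nlinarith
    · push_neg at hWα
      have hα_eq : α = m0 := by
        rcases Set.mem_insert_iff.1 hαmem with h | h
        · exact h
        · exact absurd h.2 (not_le.2 hWα)
      have h0 : Wd α = 0 := by rw [hα_eq]; exact hWd0
      have := hMono α ⟨le_rfl, hαle.trans hp₀β.le⟩ p₀ hp₀αβ hαle
      linarith
  -- conclude
  have hFTC2 : (∫ t in p₀..β, Wd t) = W β - W p₀ :=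
    hFTC p₀ β hm0p hp₀β.le hβ1 (hWdint p₀ β hαle hp₀β.le le_rfl)
  have hnn : 0 ≤ ∫ t in p₀..β, Wd t := by
    apply intervalIntegral.integral_nonneg hp₀β.le
    intro x hx
    exact le_trans hWdp₀ (hMono p₀ hp₀αβ x ⟨hαle.trans hx.1, hx.2⟩ hx.1)
  linarith

/-- the double-obstacle ODE has a unique solution in C²⁻[m0,1]. -/
theorem stmt_17
    (F Fhat : StieltjesFunction ℝ) (g : ℝ → ℝ) (θ0 θ : ℝ)
    (hF_neg : ∀ z : ℝ, z < 0 → F z = 0)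
    (hF_top : Tendsto (fun z => F z) atTop (nhds 1))
    (hg_mono : MonotoneOn g (Set.Icc 0 1))
    (hg_left : ∀ p ∈ Set.Ioc (0:ℝ) 1, Tendsto g (nhdsWithin p (Set.Iio p)) (nhds (g p)))
    (hg_zero : g 0 = 0)
    (hg_zero' : Tendsto g (nhdsWithin 0 (Set.Ioi 0)) (nhds 0))
    (hg_one : g 1 = 1)
    (hg_pos : 0 < g (1 - F 0))
    (hθ0 : -1 < θ0)
    (hθ : θ = (1 + θ0) * g (1 - F 0) - 1)
    (hFhat : ∀ z : ℝ, Fhat z = if z < 0 then 0 else 1 - g (1 - F z) / g (1 - F 0))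
    (hFhat_top : Tendsto (fun z => Fhat z) atTop (nhds 1))
    (prem : ℝ) (hprem_pos : 0 < prem)
    (hEZ_pos : 0 < ∫⁻ z in Set.Ioi (0:ℝ), ENNReal.ofReal z ∂F.measure)
    (hEZ_lt : (∫⁻ z in Set.Ioi (0:ℝ), ENNReal.ofReal z ∂F.measure) < ENNReal.ofReal prem)
    (hprem_lt : ENNReal.ofReal prem <
        ENNReal.ofReal (1 + θ) * ∫⁻ z in Set.Ioi (0:ℝ), ENNReal.ofReal z ∂Fhat.measure)
    (hfin : ENNReal.ofReal (1 + θ) *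
        (∫⁻ z in Set.Ioi (0:ℝ), ENNReal.ofReal z ∂Fhat.measure) < ⊤)
    (astar : ℝ) (hastar_pos : 0 < astar)
    (hastar : vfun F.measure Fhat.measure θ astar =
        ((prem - (ENNReal.ofReal (1 + θ) *
          (∫⁻ z in Set.Ioi (0:ℝ), ENNReal.ofReal z ∂Fhat.measure)).toReal : ℝ) : EReal))
    (hm0 : F 0 < 1)
    (Finv h : ℝ → ℝ)
    (hFinv_def : ∀ p ∈ Set.Ioc (0:ℝ) 1, Finv p = sInf {z : ℝ | 0 ≤ z ∧ p ≤ F z})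
    (hFinv_zero : Finv 0 = 0)
    (hFinv_lim : Tendsto Finv (nhdsWithin 0 (Set.Ioi 0)) (nhds (Finv 0)))
    (hFinv_AC : ∀ p ∈ Set.Icc (0:ℝ) 1, Finv p = ∫ t in (0:ℝ)..p, h t)
    (hh_int : IntegrableOn h (Set.Icc 0 1))
    (hh_pos : ∀ᵐ p ∂(volume.restrict (Set.Ioo (F 0) 1)), 0 < h p)
    (Ψ₁ Ψ₁d Ψ₁dd Ψ₂ Ψ₂d Ψ₂dd : ℝ → ℝ)
    (hC2₁ : IsC2m (F 0) Ψ₁ Ψ₁d Ψ₁dd)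
    (hDO₁ : SolvesDO (F 0) astar θ0 g h Ψ₁ Ψ₁d Ψ₁dd)
    (hC2₂ : IsC2m (F 0) Ψ₂ Ψ₂d Ψ₂dd)
    (hDO₂ : SolvesDO (F 0) astar θ0 g h Ψ₂ Ψ₂d Ψ₂dd) :
    ∀ p ∈ Set.Icc (F 0) 1, Ψ₁ p = Ψ₂ p := by
  exact fun p hp =>
  le_antisymm
    (aux_le (F 0) astar θ0 g h hastar_pos hh_pos Ψ₁ Ψ₁d Ψ₁dd Ψ₂ Ψ₂d Ψ₂dd hC2₁ hDO₁ hC2₂ hDO₂ p hp)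
    (aux_le (F 0) astar θ0 g h hastar_pos hh_pos Ψ₂ Ψ₂d Ψ₂dd Ψ₁ Ψ₁d Ψ₁dd hC2₂ hDO₂ hC2₁ hDO₁ p hp)
end
end
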